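/- arXiv:2412.11604 — 8 statements merged into one kernel-verified Lean document; each statement's English description precedes it below -/
import Mathlib

section
/- Let c > 0 be real, γ ∈ ℝ, and s ∈ ℂ with Re(s) > 0. Then for every nonzero x ∈ ℝ, the convolution of the GL(1) Hecke–Baxter kernel Q_{s,c}(y) = |y|^s e^{-y²/(2c)} with the character Φ_γ(y) = |y|^{iγ} against the Haar measure dy/|y| on ℝ∖{0} satisfies ∫_{ℝ∖{0}} |y|^s e^{-y²/(2c)} |x·y^{-1}|^{iγ} dy/|y| = (2c)^{(s-iγ)/2} · Γ((s-iγ)/2) · |x|^{iγ}, where Γ is the complex Gamma function and all powers of positive reals are principal complex powers. -/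
open MeasureTheory

section Aux
open Set Complex

private lemma hb_key (c : ℝ) (hc : 0 < c) (z : ℂ) (hz : 0 < z.re) :
    ∫ t in Ioi (0:ℝ), (t:ℂ) ^ (z - 1) * Complex.exp (-(t:ℂ) ^ 2 / (2 * (c:ℂ)))
      = (2 * (c:ℂ)) ^ (z / 2) * Complex.Gamma (z / 2) / 2 := by
  set g : ℝ → ℂ := fun u => (u:ℂ) ^ (z/2 - 1) * Complex.exp (-(((2*c)⁻¹ : ℝ) * u : ℂ)) with hg
  have hr : (0:ℝ) < (2*c)⁻¹ := by positivity
  have h1 : ∫ u in Ioi (0:ℝ), g u = (1 / ((2*c)⁻¹ : ℝ) : ℂ) ^ (z/2) * Complex.Gamma (z/2) := by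
    simpa [g] using Complex.integral_cpow_mul_exp_neg_mul_Ioi
      (a := z/2) (r := (2*c)⁻¹) (by simpa using half_pos hz) hr
  have h2 : (∫ x in Ioi (0:ℝ), (2 * x ^ ((2:ℝ) - 1)) • g (x ^ (2:ℝ)))
      = 2 * ∫ t in Ioi (0:ℝ), (t:ℂ) ^ (z - 1) * Complex.exp (-(t:ℂ) ^ 2 / (2 * (c:ℂ))) := by
    rw [← integral_const_mul]
    refine setIntegral_congr_fun measurableSet_Ioi (fun t ht => ?_)
    have ht' : (0:ℝ) < t := ht
    have ht0 : (t:ℂ) ≠ 0 := by exact_mod_cast ht'.ne'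
    have hb : ((t ^ (2:ℝ) : ℝ) : ℂ) = (t:ℂ) ^ (2:ℕ) := by
      rw [show ((2:ℝ)) = ((2:ℕ):ℝ) by norm_num, Real.rpow_natCast]; push_cast; ring
    have hcp : ((t ^ (2:ℝ) : ℝ) : ℂ) ^ (z/2 - 1) = (t:ℂ) ^ (z - 2) := by
      rw [hb, ← Complex.cpow_nat_mul' (x := (t:ℂ)) (n := 2)
        (by rw [Complex.arg_ofReal_of_nonneg ht'.le]; simpa using Real.pi_pos)
        (by rw [Complex.arg_ofReal_of_nonneg ht'.le]; simpa using Real.pi_pos.le)]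
      norm_num
      ring_nf
    have hexp : (-(((2*c)⁻¹ : ℝ) * (t ^ (2:ℝ) : ℝ) : ℂ)) = -(t:ℂ) ^ 2 / (2 * (c:ℂ)) := by
      rw [show ((2:ℝ)) = ((2:ℕ):ℝ) by norm_num, Real.rpow_natCast]
      push_cast
      field_simp
    have h3 : (t:ℂ) ^ (z - 1) = (t:ℂ) ^ (z - 2) * (t:ℂ) := by
      rw [show z - 1 = (z - 2) + 1 by ring, Complex.cpow_add _ _ ht0, Complex.cpow_one]
    simp only [g, hcp]
    rw [real_smul, hexp, h3, show ((2:ℝ) - 1) = 1 by norm_num, Real.rpow_one]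
    push_cast
    ring
  have h4 := integral_comp_rpow_Ioi_of_pos (g := g) (p := 2) two_pos
  rw [h4, h1] at h2
  have h5 : (1 / ((2*c)⁻¹ : ℝ) : ℂ) = 2 * (c:ℂ) := by push_cast; field_simp
  rw [h5] at h2
  rw [h2]
  ring

private lemma hb_intOn (c : ℝ) (hc : 0 < c) (z : ℂ) (hz : 0 < z.re) :
    IntegrableOn (fun y : ℝ => ((|y| : ℝ) : ℂ) ^ (z - 1) *
      Complex.exp (-(y:ℂ) ^ 2 / (2 * (c:ℂ)))) (Ioi 0) := by
  have hb : (0:ℝ) < (2*c)⁻¹ := by positivity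
  apply Integrable.mono' (integrableOn_rpow_mul_exp_neg_mul_sq hb (s := z.re - 1) (by linarith))
  · refine (ContinuousOn.mul ?_ ?_).aestronglyMeasurable measurableSet_Ioi
    · intro y hy
      have hy' : (0:ℝ) < y := hy
      exact ((continuousAt_ofReal_cpow_const |y| (z - 1)
        (Or.inr (by simp [abs_ne_zero, hy'.ne']))).comp
        continuous_abs.continuousAt).continuousWithinAt
    · exact (Complex.continuous_exp.comp (by fun_prop)).continuousOn
  · filter_upwards [ae_restrict_mem measurableSet_Ioi] with y hy
    have hy' : (0:ℝ) < y := hy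
    have h1 : -(y:ℂ) ^ 2 / (2 * (c:ℂ)) = ((-((2*c)⁻¹ * y ^ 2) : ℝ) : ℂ) := by
      push_cast; field_simp
    rw [norm_mul,
      Complex.norm_cpow_eq_rpow_re_of_pos (abs_pos.mpr hy'.ne'), h1, Complex.norm_exp]
    simp only [Complex.sub_re, Complex.one_re, Complex.ofReal_re, abs_of_pos hy', neg_mul]
    exact le_of_eq rfl

private lemma hb_even (c : ℝ) (z : ℂ) (y : ℝ) :
    ((|(-y)| : ℝ) : ℂ) ^ (z - 1) * Complex.exp (-((((-y) : ℝ)):ℂ) ^ 2 / (2 * (c:ℂ)))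
      = ((|y| : ℝ) : ℂ) ^ (z - 1) * Complex.exp (-(y:ℂ) ^ 2 / (2 * (c:ℂ))) := by
  simp only [abs_neg, Complex.ofReal_neg, neg_sq]

private lemma hb_intOn_Iio (c : ℝ) (hc : 0 < c) (z : ℂ) (hz : 0 < z.re) :
    IntegrableOn (fun y : ℝ => ((|y| : ℝ) : ℂ) ^ (z - 1) *
      Complex.exp (-(y:ℂ) ^ 2 / (2 * (c:ℂ)))) (Iio 0) := by
  rw [← Measure.map_neg_eq_self (volume : Measure ℝ)]
  have m : MeasurableEmbedding fun x : ℝ => -x := (Homeomorph.neg ℝ).measurableEmbedding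
  rw [m.integrableOn_map_iff]
  have : ((fun y : ℝ => ((|y| : ℝ) : ℂ) ^ (z - 1) *
      Complex.exp (-(y:ℂ) ^ 2 / (2 * (c:ℂ)))) ∘ fun x : ℝ => -x)
      = fun y : ℝ => ((|y| : ℝ) : ℂ) ^ (z - 1) *
      Complex.exp (-(y:ℂ) ^ 2 / (2 * (c:ℂ))) := by
    funext y
    simp only [Function.comp_apply]
    exact hb_even c z y
  rw [this]
  have hpre : (fun x : ℝ => -x) ⁻¹' Iio 0 = Ioi 0 := by
    ext u; simp
  rw [hpre]
  exact hb_intOn c hc z hz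

end Aux

/-- The convolution of the GL(1) Hecke–Baxter kernel `Q_{s,c}(y) = |y|^s e^{-y²/(2c)}`
with the character `Φ_γ(y) = |y|^{iγ}` against the Haar measure `dy/|y|` on `ℝ ∖ {0}`
equals `(2c)^{(s-iγ)/2} Γ((s-iγ)/2) |x|^{iγ}`. -/
theorem stmt_0 (c : ℝ) (hc : 0 < c) (γ : ℝ) (s : ℂ) (hs : 0 < s.re)
    (x : ℝ) (hx : x ≠ 0) :
    ∫ y in ({0}ᶜ : Set ℝ),
      (((|y| : ℝ) : ℂ) ^ s * Complex.exp (-(y : ℂ) ^ 2 / (2 * (c : ℂ))) *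
          ((|x * y⁻¹| : ℝ) : ℂ) ^ (Complex.I * (γ : ℂ))) / ((|y| : ℝ) : ℂ)
      = (2 * (c : ℂ)) ^ ((s - Complex.I * (γ : ℂ)) / 2) *
          Complex.Gamma ((s - Complex.I * (γ : ℂ)) / 2) *
          ((|x| : ℝ) : ℂ) ^ (Complex.I * (γ : ℂ)) := by
  classical
  set w : ℂ := Complex.I * (γ : ℂ) with hw
  set z : ℂ := s - w with hzdef
  have hzre : z.re = s.re := by
    simp [hzdef, hw, Complex.sub_re, Complex.mul_re]
  have hz : 0 < z.re := by rw [hzre]; exact hs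
  let H : ℝ → ℂ := fun y => ((|y| : ℝ) : ℂ) ^ (z - 1) *
      Complex.exp (-(y:ℂ) ^ 2 / (2 * (c:ℂ)))
  -- Step 1: pointwise identity on {0}ᶜ
  have step1 : ∫ y in ({0}ᶜ : Set ℝ),
      (((|y| : ℝ) : ℂ) ^ s * Complex.exp (-(y : ℂ) ^ 2 / (2 * (c : ℂ))) *
          ((|x * y⁻¹| : ℝ) : ℂ) ^ w) / ((|y| : ℝ) : ℂ)
      = ∫ y in ({0}ᶜ : Set ℝ), ((|x| : ℝ) : ℂ) ^ w * H y := by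
    refine setIntegral_congr_fun (measurableSet_singleton 0).compl (fun y hy => ?_)
    have hy0 : y ≠ 0 := hy
    have hay : (0:ℝ) < |y| := abs_pos.mpr hy0
    have hay0 : ((|y| : ℝ) : ℂ) ≠ 0 := by exact_mod_cast hay.ne'
    have h1 : (|x * y⁻¹| : ℝ) = |x| * |y|⁻¹ := by rw [abs_mul, abs_inv]
    have h2 : ((|x * y⁻¹| : ℝ) : ℂ) ^ w = ((|x| : ℝ) : ℂ) ^ w * (((|y| : ℝ) : ℂ) ^ w)⁻¹ := by
      rw [h1, Complex.ofReal_mul, Complex.mul_cpow_ofReal_nonneg (abs_nonneg x) (inv_nonneg.mpr (abs_nonneg y)),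
        Complex.ofReal_inv, Complex.inv_cpow]
      rw [Complex.arg_ofReal_of_nonneg (abs_nonneg y)]
      exact Real.pi_ne_zero.symm
    have hwne : ((|y| : ℝ) : ℂ) ^ w ≠ 0 := by
      simp [Complex.cpow_eq_zero_iff, hay0]
    have h3 : ((|y| : ℝ) : ℂ) ^ (z - 1)
        = ((|y| : ℝ) : ℂ) ^ s * (((|y| : ℝ) : ℂ) ^ w)⁻¹ * (((|y| : ℝ) : ℂ))⁻¹ := by
      rw [show z - 1 = s - w - 1 from by rw [hzdef], Complex.cpow_sub _ _ hay0,
        Complex.cpow_sub _ _ hay0, Complex.cpow_one]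
      field_simp
    show _ = _ * (((|y| : ℝ) : ℂ) ^ (z - 1) * Complex.exp (-(y:ℂ) ^ 2 / (2 * (c:ℂ))))
    rw [h2, h3]
    field_simp
  rw [step1, integral_const_mul]
  -- Step 2: split the integral over {0}ᶜ
  have hIoi : IntegrableOn H (Set.Ioi 0) := hb_intOn c hc z hz
  have hIio : IntegrableOn H (Set.Iio 0) := hb_intOn_Iio c hc z hz
  have hsplit : ∫ y in ({0}ᶜ : Set ℝ), H y
      = (∫ y in Set.Iio (0:ℝ), H y) + ∫ y in Set.Ioi (0:ℝ), H y := by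
    rw [← Set.Iio_union_Ioi]
    exact setIntegral_union ((Set.Iio_disjoint_Ici le_rfl).mono_right Set.Ioi_subset_Ici_self)
      measurableSet_Ioi hIio hIoi
  have hneg : ∫ y in Set.Iio (0:ℝ), H y = ∫ y in Set.Ioi (0:ℝ), H y := by
    rw [← integral_Iic_eq_integral_Iio]
    rw [show (0:ℝ) = -0 from (neg_zero).symm, ← integral_comp_neg_Iic]
    simp only [neg_zero]
    refine setIntegral_congr_fun measurableSet_Iic (fun y _ => (hb_even c z y).symm)
  have hpos : ∫ y in Set.Ioi (0:ℝ), H y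
      = (2 * (c:ℂ)) ^ (z / 2) * Complex.Gamma (z / 2) / 2 := by
    rw [← hb_key c hc z hz]
    refine setIntegral_congr_fun measurableSet_Ioi (fun y hy => ?_)
    have hy' : (0:ℝ) < y := hy
    show ((|y| : ℝ) : ℂ) ^ (z - 1) * _ = _
    rw [abs_of_pos hy']
  rw [hsplit, hneg, hpos]
  ring
end

section
/- Let A be an associative ℂ-algebra with unit, n ≥ 1, and write [a,b] = ab - ba. Suppose given elements e^R_{ij}, X_{ij}, Y_{ij} ∈ A (1 ≤ i,j ≤ n) and an invertible element C ∈ A such that: [X_{ij},X_{kl}] = 0, [Y_{ij},Y_{kl}] = 0, [X_{ij},Y_{kl}] = δ_{ik}δ_{jl}C, C commutes with all X_{ij}, Y_{ij} and e^R_{ij}, and [e^R_{ij}, X_{kl}] = δ_{jl}X_{ki}, [e^R_{ij}, Y_{kl}] = -δ_{il}Y_{kj}. Then the elements ê^R_{ij} := e^R_{ij} + C^{-1}·Σ_{m=1}^{n} X_{mi}Y_{mj} satisfy [ê^R_{ij}, X_{kl}] = 0 and [ê^R_{ij}, Y_{kl}] = 0 for all i,j,k,l. -/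
/-- In an associative ℂ-algebra with Heisenberg generators `X_{ij}, Y_{ij}, C`
(`C` invertible, central) and right `𝔤𝔩`-generators `e^R_{ij}` with
`[e^R_{ij}, X_{kl}] = δ_{jl}X_{ki}`, `[e^R_{ij}, Y_{kl}] = -δ_{il}Y_{kj}`, the shifted
generators `ê^R_{ij} = e^R_{ij} + C⁻¹ Σ_m X_{mi} Y_{mj}` commute with all `X_{kl}`, `Y_{kl}`. -/
theorem stmt_3 {A : Type*} [Ring A] [Algebra ℂ A] (n : ℕ) (hn : 1 ≤ n)
    (e X Y : Fin n → Fin n → A) (C Cinv : A)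
    (hC : C * Cinv = 1) (hC' : Cinv * C = 1)
    (hXX : ∀ i j k l, X i j * X k l - X k l * X i j = 0)
    (hYY : ∀ i j k l, Y i j * Y k l - Y k l * Y i j = 0)
    (hXY : ∀ i j k l, X i j * Y k l - Y k l * X i j = if i = k ∧ j = l then C else 0)
    (hCX : ∀ i j, C * X i j - X i j * C = 0)
    (hCY : ∀ i j, C * Y i j - Y i j * C = 0)
    (hCe : ∀ i j, C * e i j - e i j * C = 0)
    (heX : ∀ i j k l, e i j * X k l - X k l * e i j = (if j = l then X k i else 0))
    (heY : ∀ i j k l, e i j * Y k l - Y k l * e i j = -(if i = l then Y k j else 0)) :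
    ∀ i j k l,
      ((e i j + Cinv * ∑ m, X m i * Y m j) * X k l
          - X k l * (e i j + Cinv * ∑ m, X m i * Y m j) = 0) ∧
      ((e i j + Cinv * ∑ m, X m i * Y m j) * Y k l
          - Y k l * (e i j + Cinv * ∑ m, X m i * Y m j) = 0) := by
  have hXc : ∀ a b c d, X a b * X c d = X c d * X a b := fun a b c d =>
    sub_eq_zero.mp (hXX a b c d)
  have hYc : ∀ a b c d, Y a b * Y c d = Y c d * Y a b := fun a b c d =>
    sub_eq_zero.mp (hYY a b c d)
  have hCinvX : ∀ a b, Cinv * X a b = X a b * Cinv := by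
    intro a b
    have h := sub_eq_zero.mp (hCX a b)
    calc Cinv * X a b = Cinv * X a b * (C * Cinv) := by rw [hC, mul_one]
      _ = Cinv * (X a b * C) * Cinv := by noncomm_ring
      _ = Cinv * (C * X a b) * Cinv := by rw [← h]
      _ = (Cinv * C) * (X a b * Cinv) := by noncomm_ring
      _ = X a b * Cinv := by rw [hC', one_mul]
  have hYXe : ∀ a b c d, Y a b * X c d = X c d * Y a b - (if c = a ∧ d = b then C else 0) := by
    intro a b c d
    have h := hXY c d a b
    rw [← h]; abel
  have hXYe : ∀ a b c d, X a b * Y c d = Y c d * X a b + (if a = c ∧ b = d then C else 0) := by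
    intro a b c d
    have h := hXY a b c d
    rw [← h]; abel
  intro i j k l
  constructor
  · -- X part
    have term : ∀ m : Fin n, X m i * Y m j * X k l - X k l * (X m i * Y m j)
        = -(if m = k ∧ j = l then X m i * C else 0) := by
      intro m
      have h := hYXe m j k l
      have hx := hXc m i k l
      calc X m i * Y m j * X k l - X k l * (X m i * Y m j)
          = X m i * (Y m j * X k l) - X k l * X m i * Y m j := by noncomm_ring
        _ = X m i * (X k l * Y m j - (if k = m ∧ l = j then C else 0))
              - X k l * X m i * Y m j := by rw [h]
        _ = -(X m i * (if k = m ∧ l = j then C else 0)) := by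
              rw [← hx]; noncomm_ring
        _ = -(if m = k ∧ j = l then X m i * C else 0) := by
              rcases eq_or_ne m k with h1 | h1
              · subst h1
                rcases eq_or_ne j l with h2 | h2
                · subst h2; simp
                · simp [h2, h2.symm]
              · simp [h1, h1.symm]
    have hSX : (∑ m, X m i * Y m j) * X k l - X k l * (∑ m, X m i * Y m j)
        = -(if j = l then X k i * C else 0) := by
      rw [Finset.sum_mul, Finset.mul_sum, ← Finset.sum_sub_distrib]
      calc (∑ m, (X m i * Y m j * X k l - X k l * (X m i * Y m j)))
          = ∑ m, -(if m = k ∧ j = l then X m i * C else 0) :=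
            Finset.sum_congr rfl fun m _ => term m
        _ = -(if j = l then X k i * C else 0) := by
            by_cases hjl : j = l <;> simp [hjl, Finset.sum_ite_eq']
    have key : Cinv * ((∑ m, X m i * Y m j) * X k l - X k l * (∑ m, X m i * Y m j))
        = -(if j = l then X k i else 0) := by
      rw [hSX]
      by_cases hjl : j = l <;> simp only [hjl, if_true, if_false, mul_neg, mul_zero, neg_zero]
      rw [← mul_assoc, hCinvX, mul_assoc, hC', mul_one]
    have hx' : X k l * (Cinv * (∑ m, X m i * Y m j))
        = Cinv * (X k l * (∑ m, X m i * Y m j)) := by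
      rw [← mul_assoc, ← hCinvX k l, mul_assoc]
    have expand : (e i j + Cinv * ∑ m, X m i * Y m j) * X k l
        - X k l * (e i j + Cinv * ∑ m, X m i * Y m j)
        = (e i j * X k l - X k l * e i j)
          + Cinv * ((∑ m, X m i * Y m j) * X k l - X k l * (∑ m, X m i * Y m j)) := by
      rw [add_mul, mul_add, hx']; noncomm_ring
    rw [expand, heX i j k l, key]; abel
  · -- Y part
    have hCinvY : ∀ a b, Cinv * Y a b = Y a b * Cinv := by
      intro a b
      have h := sub_eq_zero.mp (hCY a b)
      calc Cinv * Y a b = Cinv * Y a b * (C * Cinv) := by rw [hC, mul_one]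
        _ = Cinv * (Y a b * C) * Cinv := by noncomm_ring
        _ = Cinv * (C * Y a b) * Cinv := by rw [← h]
        _ = (Cinv * C) * (Y a b * Cinv) := by noncomm_ring
        _ = Y a b * Cinv := by rw [hC', one_mul]
    have term : ∀ m : Fin n, X m i * Y m j * Y k l - Y k l * (X m i * Y m j)
        = (if m = k ∧ i = l then C * Y m j else 0) := by
      intro m
      have hy := hYc m j k l
      have h := hXYe m i k l
      calc X m i * Y m j * Y k l - Y k l * (X m i * Y m j)
          = X m i * (Y m j * Y k l) - Y k l * X m i * Y m j := by noncomm_ring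
        _ = (X m i * Y k l) * Y m j - Y k l * X m i * Y m j := by
            rw [hy]; noncomm_ring
        _ = (Y k l * X m i + (if m = k ∧ i = l then C else 0)) * Y m j
              - Y k l * X m i * Y m j := by rw [h]
        _ = (if m = k ∧ i = l then C else 0) * Y m j := by noncomm_ring
        _ = (if m = k ∧ i = l then C * Y m j else 0) := by
            by_cases h1 : m = k <;> by_cases h2 : i = l <;> simp [h1, h2]
    have hSY : (∑ m, X m i * Y m j) * Y k l - Y k l * (∑ m, X m i * Y m j)
        = (if i = l then C * Y k j else 0) := by
      rw [Finset.sum_mul, Finset.mul_sum, ← Finset.sum_sub_distrib]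
      calc (∑ m, (X m i * Y m j * Y k l - Y k l * (X m i * Y m j)))
          = ∑ m, (if m = k ∧ i = l then C * Y m j else 0) :=
            Finset.sum_congr rfl fun m _ => term m
        _ = (if i = l then C * Y k j else 0) := by
            by_cases hil : i = l <;> simp [hil, Finset.sum_ite_eq']
    have key : Cinv * ((∑ m, X m i * Y m j) * Y k l - Y k l * (∑ m, X m i * Y m j))
        = (if i = l then Y k j else 0) := by
      rw [hSY]
      by_cases hil : i = l <;> simp [hil, ← mul_assoc, hC']
    have hy' : Y k l * (Cinv * (∑ m, X m i * Y m j))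
        = Cinv * (Y k l * (∑ m, X m i * Y m j)) := by
      rw [← mul_assoc, ← hCinvY k l, mul_assoc]
    have expand : (e i j + Cinv * ∑ m, X m i * Y m j) * Y k l
        - Y k l * (e i j + Cinv * ∑ m, X m i * Y m j)
        = (e i j * Y k l - Y k l * e i j)
          + Cinv * ((∑ m, X m i * Y m j) * Y k l - Y k l * (∑ m, X m i * Y m j)) := by
      rw [add_mul, mul_add, hy']; noncomm_ring
    rw [expand, heY i j k l, key]; abel
end

section
/- Let A be an associative ℂ-algebra with unit, n ≥ 1, and write [a,b] = ab - ba. Suppose given elements e^L_{ij}, e^R_{ij}, X_{ij}, Y_{ij} ∈ A (1 ≤ i,j ≤ n) and an invertible element C ∈ A satisfying: [X_{ij},X_{kl}] = 0, [Y_{ij},Y_{kl}] = 0, [X_{ij},Y_{kl}] = δ_{ik}δ_{jl}C, C commutes with all listed elements, [e^{L}_{ij}, e^{L}_{kl}] = δ_{jk}e^{L}_{il} - δ_{il}e^{L}_{kj}, [e^{R}_{ij}, e^{R}_{kl}] = δ_{jk}e^{R}_{il} - δ_{il}e^{R}_{kj}, [e^L_{ij}, e^R_{kl}] = 0, [e^L_{ij},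 X_{kl}] = -δ_{ik}X_{jl}, [e^L_{ij}, Y_{kl}] = δ_{jk}Y_{il}, [e^R_{ij}, X_{kl}] = δ_{jl}X_{ki}, [e^R_{ij}, Y_{kl}] = -δ_{il}Y_{kj}. Define ê^L_{ij} := e^L_{ij} - C^{-1}Σ_m X_{jm}Y_{im} and ê^R_{ij} := e^R_{ij} + C^{-1}Σ_m X_{mi}Y_{mj}. Then [ê^L_{ij}, ê^L_{kl}] = δ_{jk}ê^L_{il} - δ_{il}ê^L_{kj}, [ê^R_{ij}, ê^R_{kl}] = δ_{jk}ê^R_{il} - δ_{il}ê^R_{kj}, and [ê^L_{ij}, ê^R_{kl}] = 0 for all i,j,k,l. -/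
/-- The shifted left generator `ê^L_{ij} = e^L_{ij} - C⁻¹ Σ_m X_{jm} Y_{im}`. -/
def hatL {A : Type*} [Ring A] {n : ℕ} (e X Y : Fin n → Fin n → A) (Cinv : A)
    (i j : Fin n) : A :=
  e i j - Cinv * ∑ m, X j m * Y i m

/-- The shifted right generator `ê^R_{ij} = e^R_{ij} + C⁻¹ Σ_m X_{mi} Y_{mj}`. -/
def hatR {A : Type*} [Ring A] {n : ℕ} (e X Y : Fin n → Fin n → A) (Cinv : A)
    (i j : Fin n) : A :=
  e i j + Cinv * ∑ m, X m i * Y m j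

section Aux

variable {A : Type*} [Ring A]

/-- Commutator of a product on the right. -/
private lemma comm_mul_right (a x y : A) :
    a * (x * y) - x * y * a = (a * x - x * a) * y + x * (a * y - y * a) := by
  noncomm_ring

/-- Commutator of two products, given the "outer" pairs commute. -/
private lemma comm4 (x y z w : A) (h1 : y * w - w * y = 0) (h2 : x * z - z * x = 0) :
    x * y * (z * w) - z * w * (x * y)
      = x * (y * z - z * y) * w + z * (x * w - w * x) * y := by
  have key : x * y * (z * w) - z * w * (x * y)
      - (x * (y * z - z * y) * w + z * (x * w - w * x) * y)
      = z * x * (y * w - w * y) + (x * z - z * x) * (y * w) := by noncomm_ring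
  rw [h1, h2] at key
  simp only [mul_zero, zero_mul, add_zero] at key
  exact sub_eq_zero.mp key

/-- Commutator of two sums as a double sum of commutators. -/
private lemma sum_comm_sub {ι : Type*} (s t : Finset ι) (f g : ι → A) :
    (∑ m ∈ s, f m) * (∑ p ∈ t, g p) - (∑ p ∈ t, g p) * (∑ m ∈ s, f m)
      = ∑ m ∈ s, ∑ p ∈ t, (f m * g p - g p * f m) := by
  rw [Finset.sum_mul_sum, Finset.sum_mul_sum]
  rw [show (∑ p ∈ t, ∑ m ∈ s, g p * f m) = ∑ m ∈ s, ∑ p ∈ t, g p * f m from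
    Finset.sum_comm]
  rw [← Finset.sum_sub_distrib]
  exact Finset.sum_congr rfl fun m _ => (Finset.sum_sub_distrib _ _).symm

end Aux

/-- The shifted generators `ê^L`, `ê^R` satisfy the same `𝔤𝔩_n ⊕ 𝔤𝔩_n` commutation
relations as `e^L`, `e^R`, and the two shifted families commute with each other. -/
theorem stmt_4 {A : Type*} [Ring A] [Algebra ℂ A] (n : ℕ) (hn : 1 ≤ n)
    (eL eR X Y : Fin n → Fin n → A) (C Cinv : A)
    (hC : C * Cinv = 1) (hC' : Cinv * C = 1)
    (hXX : ∀ i j k l, X i j * X k l - X k l * X i j = 0)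
    (hYY : ∀ i j k l, Y i j * Y k l - Y k l * Y i j = 0)
    (hXY : ∀ i j k l, X i j * Y k l - Y k l * X i j = if i = k ∧ j = l then C else 0)
    (hCX : ∀ i j, C * X i j - X i j * C = 0)
    (hCY : ∀ i j, C * Y i j - Y i j * C = 0)
    (hCeL : ∀ i j, C * eL i j - eL i j * C = 0)
    (hCeR : ∀ i j, C * eR i j - eR i j * C = 0)
    (heLeL : ∀ i j k l, eL i j * eL k l - eL k l * eL i j
      = (if j = k then eL i l else 0) - (if i = l then eL k j else 0))
    (heReR : ∀ i j k l, eR i j * eR k l - eR k l * eR i j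
      = (if j = k then eR i l else 0) - (if i = l then eR k j else 0))
    (heLeR : ∀ i j k l, eL i j * eR k l - eR k l * eL i j = 0)
    (heLX : ∀ i j k l, eL i j * X k l - X k l * eL i j = -(if i = k then X j l else 0))
    (heLY : ∀ i j k l, eL i j * Y k l - Y k l * eL i j = (if j = k then Y i l else 0))
    (heRX : ∀ i j k l, eR i j * X k l - X k l * eR i j = (if j = l then X k i else 0))
    (heRY : ∀ i j k l, eR i j * Y k l - Y k l * eR i j = -(if i = l then Y k j else 0)) :
    ∀ i j k l,
      (hatL eL X Y Cinv i j * hatL eL X Y Cinv k l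
          - hatL eL X Y Cinv k l * hatL eL X Y Cinv i j
        = (if j = k then hatL eL X Y Cinv i l else 0)
          - (if i = l then hatL eL X Y Cinv k j else 0)) ∧
      (hatR eR X Y Cinv i j * hatR eR X Y Cinv k l
          - hatR eR X Y Cinv k l * hatR eR X Y Cinv i j
        = (if j = k then hatR eR X Y Cinv i l else 0)
          - (if i = l then hatR eR X Y Cinv k j else 0)) ∧
      (hatL eL X Y Cinv i j * hatR eR X Y Cinv k l
          - hatR eR X Y Cinv k l * hatL eL X Y Cinv i j = 0) := by
  -- basic commutation facts
  have hXC : ∀ a b, X a b * C = C * X a b := fun a b => (sub_eq_zero.mp (hCX a b)).symm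
  have hYC : ∀ a b, Y a b * C = C * Y a b := fun a b => (sub_eq_zero.mp (hCY a b)).symm
  have hCinv : ∀ a : A, C * a = a * C → a * Cinv = Cinv * a := by
    intro a h
    have c1 : Cinv * a = Cinv * (a * C) * Cinv := by
      rw [mul_assoc, mul_assoc, hC, mul_one]
    have c2 : Cinv * (a * C) * Cinv = Cinv * (C * a) * Cinv := by rw [h]
    have c3 : Cinv * (C * a) * Cinv = a * Cinv := by
      rw [← mul_assoc, hC', one_mul]
    rw [c1, c2, c3]
  have hXCi : ∀ a b, X a b * Cinv = Cinv * X a b :=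
    fun a b => hCinv _ (sub_eq_zero.mp (hCX a b))
  have hYCi : ∀ a b, Y a b * Cinv = Cinv * Y a b :=
    fun a b => hCinv _ (sub_eq_zero.mp (hCY a b))
  have hCC : ∀ s : A, Cinv * (C * s) = s := by
    intro s; rw [← mul_assoc, hC', one_mul]
  -- Cinv commutes with the quadratic sums
  have hSCi : ∀ i j, (∑ m, X j m * Y i m) * Cinv = Cinv * ∑ m, X j m * Y i m := by
    intro i j
    rw [Finset.sum_mul, Finset.mul_sum]
    refine Finset.sum_congr rfl fun m _ => ?_
    rw [mul_assoc, hYCi, ← mul_assoc, hXCi, mul_assoc]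
  have hTCi : ∀ i j, (∑ m, X m i * Y m j) * Cinv = Cinv * ∑ m, X m i * Y m j := by
    intro i j
    rw [Finset.sum_mul, Finset.mul_sum]
    refine Finset.sum_congr rfl fun m _ => ?_
    rw [mul_assoc, hYCi, ← mul_assoc, hXCi, mul_assoc]
  -- bracket with Cinv * s
  have brC : ∀ a s : A, a * Cinv = Cinv * a →
      a * (Cinv * s) - (Cinv * s) * a = Cinv * (a * s - s * a) := by
    intro a s h
    rw [mul_sub, ← mul_assoc, h, mul_assoc, mul_assoc]
  have swap2 : ∀ x y : A, x * Cinv = Cinv * x →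
      (Cinv * x) * (Cinv * y) = Cinv * (Cinv * (x * y)) := by
    intro x y hx
    calc (Cinv * x) * (Cinv * y) = Cinv * (x * (Cinv * y)) := by rw [mul_assoc]
      _ = Cinv * ((x * Cinv) * y) := by rw [mul_assoc]
      _ = Cinv * ((Cinv * x) * y) := by rw [hx]
      _ = Cinv * (Cinv * (x * y)) := by rw [mul_assoc]
  have brC3 : ∀ s t : A, s * Cinv = Cinv * s → t * Cinv = Cinv * t →
      (Cinv * s) * (Cinv * t) - (Cinv * t) * (Cinv * s)
        = Cinv * (Cinv * (s * t - t * s)) := by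
    intro s t hs ht
    rw [swap2 s t hs, swap2 t s ht, mul_sub, mul_sub]
  -- brackets of e's with the quadratic sums
  have eLS : ∀ i j k l, eL i j * (∑ m, X l m * Y k m) - (∑ m, X l m * Y k m) * eL i j
      = (if j = k then ∑ m, X l m * Y i m else 0)
        - (if i = l then ∑ m, X j m * Y k m else 0) := by
    intro i j k l
    rw [Finset.mul_sum, Finset.sum_mul, ← Finset.sum_sub_distrib]
    have step : ∀ m ∈ Finset.univ, eL i j * (X l m * Y k m) - X l m * Y k m * eL i j
        = (if j = k then X l m * Y i m else 0) - (if i = l then X j m * Y k m else 0) := by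
      intro m _
      rw [comm_mul_right, heLX i j l m, heLY i j k m]
      split_ifs <;> noncomm_ring
    rw [Finset.sum_congr rfl step, Finset.sum_sub_distrib]
    by_cases h1 : j = k <;> by_cases h2 : i = l <;> simp [h1, h2]
  have eRT : ∀ i j k l, eR i j * (∑ m, X m k * Y m l) - (∑ m, X m k * Y m l) * eR i j
      = (if j = k then ∑ m, X m i * Y m l else 0)
        - (if i = l then ∑ m, X m k * Y m j else 0) := by
    intro i j k l
    rw [Finset.mul_sum, Finset.sum_mul, ← Finset.sum_sub_distrib]
    have step : ∀ m ∈ Finset.univ, eR i j * (X m k * Y m l) - X m k * Y m l * eR i j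
        = (if j = k then X m i * Y m l else 0) - (if i = l then X m k * Y m j else 0) := by
      intro m _
      rw [comm_mul_right, heRX i j m k, heRY i j m l]
      split_ifs <;> noncomm_ring
    rw [Finset.sum_congr rfl step, Finset.sum_sub_distrib]
    by_cases h1 : j = k <;> by_cases h2 : i = l <;> simp [h1, h2]
  have eLT : ∀ i j k l, eL i j * (∑ m, X m k * Y m l) - (∑ m, X m k * Y m l) * eL i j
      = 0 := by
    intro i j k l
    rw [Finset.mul_sum, Finset.sum_mul, ← Finset.sum_sub_distrib]
    have step : ∀ m ∈ Finset.univ, eL i j * (X m k * Y m l) - X m k * Y m l * eL i j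
        = (if i = m then -(X j k * Y m l) else 0) + (if j = m then X m k * Y i l else 0) := by
      intro m _
      rw [comm_mul_right, heLX i j m k, heLY i j m l]
      split_ifs <;> noncomm_ring
    rw [Finset.sum_congr rfl step]
    simp [Finset.sum_add_distrib]
  have eRS : ∀ i j k l, eR i j * (∑ m, X l m * Y k m) - (∑ m, X l m * Y k m) * eR i j
      = 0 := by
    intro i j k l
    rw [Finset.mul_sum, Finset.sum_mul, ← Finset.sum_sub_distrib]
    have step : ∀ m ∈ Finset.univ, eR i j * (X l m * Y k m) - X l m * Y k m * eR i j
        = (if j = m then X l i * Y k m else 0) + (if i = m then -(X l m * Y k j) else 0) := by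
      intro m _
      rw [comm_mul_right, heRX i j l m, heRY i j k m]
      split_ifs <;> noncomm_ring
    rw [Finset.sum_congr rfl step]
    simp [Finset.sum_add_distrib]
  -- brackets among the quadratic sums
  have SS : ∀ i j k l, (∑ m, X j m * Y i m) * (∑ m, X l m * Y k m)
      - (∑ m, X l m * Y k m) * (∑ m, X j m * Y i m)
      = (if j = k then C * ∑ m, X l m * Y i m else 0)
        - (if i = l then C * ∑ m, X j m * Y k m else 0) := by
    intro i j k l
    rw [sum_comm_sub]
    have step : ∀ m p : Fin n, (X j m * Y i m) * (X l p * Y k p)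
        - (X l p * Y k p) * (X j m * Y i m)
        = (if l = i ∧ p = m then -(X j m * (C * Y k p)) else 0)
          + (if j = k ∧ m = p then X l p * (C * Y i m) else 0) := by
      intro m p
      rw [comm4 _ _ _ _ (hYY i m k p) (hXX j m l p)]
      have h1 : Y i m * X l p - X l p * Y i m = -(if l = i ∧ p = m then C else 0) := by
        rw [← hXY l p i m]; noncomm_ring
      rw [h1, hXY j m k p]
      split_ifs <;> noncomm_ring
    simp_rw [step, ite_and]
    rcases eq_or_ne j k with rfl | hjk <;> rcases eq_or_ne i l with rfl | hil
    · simp [Finset.sum_add_distrib, Finset.sum_ite_eq, Finset.sum_ite_eq',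
        Finset.mul_sum, ← mul_assoc, hXC]
      abel
    · simp [hil, Ne.symm hil, Finset.sum_add_distrib, Finset.sum_ite_eq,
        Finset.sum_ite_eq', Finset.mul_sum, ← mul_assoc, hXC]
    · simp [hjk, Ne.symm hjk, Finset.sum_add_distrib, Finset.sum_ite_eq,
        Finset.sum_ite_eq', Finset.mul_sum, ← mul_assoc, hXC]
    · simp [hjk, Ne.symm hjk, hil, Ne.symm hil]
  have TT : ∀ i j k l, (∑ m, X m i * Y m j) * (∑ m, X m k * Y m l)
      - (∑ m, X m k * Y m l) * (∑ m, X m i * Y m j)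
      = (if i = l then C * ∑ m, X m k * Y m j else 0)
        - (if j = k then C * ∑ m, X m i * Y m l else 0) := by
    intro i j k l
    rw [sum_comm_sub]
    have step : ∀ m p : Fin n, (X m i * Y m j) * (X p k * Y p l)
        - (X p k * Y p l) * (X m i * Y m j)
        = (if p = m ∧ k = j then -(X m i * (C * Y p l)) else 0)
          + (if m = p ∧ i = l then X p k * (C * Y m j) else 0) := by
      intro m p
      rw [comm4 _ _ _ _ (hYY m j p l) (hXX m i p k)]
      have h1 : Y m j * X p k - X p k * Y m j = -(if p = m ∧ k = j then C else 0) := by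
        rw [← hXY p k m j]; noncomm_ring
      rw [h1, hXY m i p l]
      split_ifs <;> noncomm_ring
    simp_rw [step, ite_and]
    rcases eq_or_ne j k with rfl | hjk <;> rcases eq_or_ne i l with rfl | hil
    · simp [Finset.sum_add_distrib, Finset.sum_ite_eq, Finset.sum_ite_eq',
        Finset.mul_sum, ← mul_assoc, hXC]
      abel
    · simp [hil, Ne.symm hil, Finset.sum_add_distrib, Finset.sum_ite_eq,
        Finset.sum_ite_eq', Finset.mul_sum, ← mul_assoc, hXC]
    · simp [hjk, Ne.symm hjk, Finset.sum_add_distrib, Finset.sum_ite_eq,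
        Finset.sum_ite_eq', Finset.mul_sum, ← mul_assoc, hXC]
    · simp [hjk, Ne.symm hjk, hil, Ne.symm hil]
  have ST : ∀ i j k l, (∑ m, X j m * Y i m) * (∑ m, X m k * Y m l)
      - (∑ m, X m k * Y m l) * (∑ m, X j m * Y i m) = 0 := by
    intro i j k l
    rw [sum_comm_sub]
    have step : ∀ m p : Fin n, (X j m * Y i m) * (X p k * Y p l)
        - (X p k * Y p l) * (X j m * Y i m)
        = (if p = i ∧ k = m then -(X j m * (C * Y p l)) else 0)
          + (if j = p ∧ m = l then X p k * (C * Y i m) else 0) := by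
      intro m p
      rw [comm4 _ _ _ _ (hYY i m p l) (hXX j m p k)]
      have h1 : Y i m * X p k - X p k * Y i m = -(if p = i ∧ k = m then C else 0) := by
        rw [← hXY p k i m]; noncomm_ring
      rw [h1, hXY j m p l]
      split_ifs <;> noncomm_ring
    simp_rw [step, ite_and]
    simp [Finset.sum_add_distrib, Finset.sum_ite_eq', Finset.sum_ite_eq]
  -- expansion identities
  have expandL : ∀ a u b v : A, (a - u) * (b - v) - (b - v) * (a - u)
      = (a * b - b * a) - (a * v - v * a) + (b * u - u * b) + (u * v - v * u) := by
    intros; noncomm_ring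
  have expandR : ∀ a u b v : A, (a + u) * (b + v) - (b + v) * (a + u)
      = (a * b - b * a) + (a * v - v * a) - (b * u - u * b) + (u * v - v * u) := by
    intros; noncomm_ring
  have expandM : ∀ a u b v : A, (a - u) * (b + v) - (b + v) * (a - u)
      = (a * b - b * a) + (a * v - v * a) + (b * u - u * b) - (u * v - v * u) := by
    intros; noncomm_ring
  intro i j k l
  refine ⟨?_, ?_, ?_⟩
  · simp only [hatL]
    rw [expandL, heLeL i j k l,
      brC (eL i j) _ (hCinv _ (sub_eq_zero.mp (hCeL i j))), eLS i j k l,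
      brC (eL k l) _ (hCinv _ (sub_eq_zero.mp (hCeL k l))), eLS k l i j,
      brC3 _ _ (hSCi i j) (hSCi k l), SS i j k l]
    rcases eq_or_ne j k with rfl | hjk <;> rcases eq_or_ne i l with rfl | hil
    · simp [mul_sub, hCC];
          try abel
    · simp [hil, Ne.symm hil, mul_sub, hCC];
          try abel
    · simp [hjk, Ne.symm hjk, mul_sub, hCC];
          try abel
    · simp [hjk, Ne.symm hjk, hil, Ne.symm hil]
  · simp only [hatR]
    rw [expandR, heReR i j k l,
      brC (eR i j) _ (hCinv _ (sub_eq_zero.mp (hCeR i j))), eRT i j k l,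
      brC (eR k l) _ (hCinv _ (sub_eq_zero.mp (hCeR k l))), eRT k l i j,
      brC3 _ _ (hTCi i j) (hTCi k l), TT i j k l]
    rcases eq_or_ne j k with rfl | hjk <;> rcases eq_or_ne i l with rfl | hil
    · simp [mul_sub, hCC];
          try abel
    · simp [hil, Ne.symm hil, mul_sub, hCC];
          try abel
    · simp [hjk, Ne.symm hjk, mul_sub, hCC];
          try abel
    · simp [hjk, Ne.symm hjk, hil, Ne.symm hil]
  · simp only [hatL, hatR]
    rw [expandM, heLeR i j k l,
      brC (eL i j) _ (hCinv _ (sub_eq_zero.mp (hCeL i j))), eLT i j k l,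
      brC (eR k l) _ (hCinv _ (sub_eq_zero.mp (hCeR k l))), eRS k l i j,
      brC3 _ _ (hSCi i j) (hTCi k l), ST i j k l]
    simp
end

section
/- Let A be an associative ℂ-algebra with unit, n ≥ 1, and write [a,b] = ab - ba. Suppose given elements b^L_{ij}, X_{ij}, Y_{ij} ∈ A (1 ≤ i,j ≤ n) with b^L_{ij} = b^L_{ji}, and an invertible element C ∈ A, such that: [X_{ij},X_{kl}] = 0, [Y_{ij},Y_{kl}] = 0, [X_{ij},Y_{kl}] = δ_{ik}δ_{jl}C, C commutes with all listed elements, [b^L_{ij}, Y_{kl}] = 0, and [b^L_{ij}, X_{kl}] = δ_{jk}Y_{il} + δ_{ik}Y_{jl}. Then the elements b̂^L_{ij} := b^L_{ij} + C^{-1}·Σ_{m=1}^{n} Y_{jm}Y_{im} satisfy [b̂^L_{ij}, X_{kl}] = 0 and [b̂^L_{ij}, Y_{kl}] = 0 for all i,j,k,l. -/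
/-- In an associative ℂ-algebra with Heisenberg generators `X_{ij}, Y_{ij}, C`
(`C` invertible, central) and symmetric generators `b^L_{ij}` with `[b^L_{ij}, Y_{kl}] = 0`,
`[b^L_{ij}, X_{kl}] = δ_{jk}Y_{il} + δ_{ik}Y_{jl}`, the shifted generators
`b̂^L_{ij} = b^L_{ij} + C⁻¹ Σ_m Y_{jm} Y_{im}` commute with all `X_{kl}`, `Y_{kl}`. -/
theorem stmt_6 {A : Type*} [Ring A] [Algebra ℂ A] (n : ℕ) (hn : 1 ≤ n)
    (b X Y : Fin n → Fin n → A) (C Cinv : A)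
    (hbsym : ∀ i j, b i j = b j i)
    (hC : C * Cinv = 1) (hC' : Cinv * C = 1)
    (hXX : ∀ i j k l, X i j * X k l - X k l * X i j = 0)
    (hYY : ∀ i j k l, Y i j * Y k l - Y k l * Y i j = 0)
    (hXY : ∀ i j k l, X i j * Y k l - Y k l * X i j = if i = k ∧ j = l then C else 0)
    (hCX : ∀ i j, C * X i j - X i j * C = 0)
    (hCY : ∀ i j, C * Y i j - Y i j * C = 0)
    (hCb : ∀ i j, C * b i j - b i j * C = 0)
    (hbY : ∀ i j k l, b i j * Y k l - Y k l * b i j = 0)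
    (hbX : ∀ i j k l, b i j * X k l - X k l * b i j
      = (if j = k then Y i l else 0) + (if i = k then Y j l else 0)) :
    ∀ i j k l,
      ((b i j + Cinv * ∑ m, Y j m * Y i m) * X k l
          - X k l * (b i j + Cinv * ∑ m, Y j m * Y i m) = 0) ∧
      ((b i j + Cinv * ∑ m, Y j m * Y i m) * Y k l
          - Y k l * (b i j + Cinv * ∑ m, Y j m * Y i m) = 0) := by
  intro i j k l
  have hCinv : ∀ z : A, C * z = z * C → Cinv * z = z * Cinv := by
    intro z hz
    calc Cinv * z = Cinv * z * (C * Cinv) := by rw [hC, mul_one]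
      _ = Cinv * (z * C) * Cinv := by rw [← mul_assoc, ← mul_assoc]
      _ = Cinv * (C * z) * Cinv := by rw [hz]
      _ = z * Cinv := by rw [← mul_assoc, hC', one_mul]
  have hCinvX : ∀ k l, Cinv * X k l = X k l * Cinv :=
    fun k l => hCinv _ (sub_eq_zero.mp (hCX k l))
  have hCinvY : ∀ k l, Cinv * Y k l = Y k l * Cinv :=
    fun k l => hCinv _ (sub_eq_zero.mp (hCY k l))
  have hCYe : ∀ k l, C * Y k l = Y k l * C := fun k l => sub_eq_zero.mp (hCY k l)
  -- commutator of the quadratic sum with X k l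
  have key : (∑ m, Y j m * Y i m) * X k l - X k l * (∑ m, Y j m * Y i m)
      = -((if k = i then Y j l * C else 0) + (if k = j then C * Y i l else 0)) := by
    rw [Finset.sum_mul, Finset.mul_sum, ← Finset.sum_sub_distrib]
    have hterm : ∀ m : Fin n, Y j m * Y i m * X k l - X k l * (Y j m * Y i m)
        = -(Y j m * (if k = i ∧ l = m then C else 0))
          - (if k = j ∧ l = m then C else 0) * Y i m := by
      intro m
      have h1 := hXY k l i m
      have h2 := hXY k l j m
      linear_combination (norm := noncomm_ring) (- Y j m) * h1 - h2 * Y i m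
    rw [Finset.sum_congr rfl fun m _ => hterm m]
    rw [Finset.sum_sub_distrib, Finset.sum_neg_distrib]
    have s1 : (∑ m, Y j m * (if k = i ∧ l = m then C else 0))
        = if k = i then Y j l * C else 0 := by
      by_cases hki : k = i
      · simp [hki, mul_ite, mul_zero]
      · simp [hki]
    have s2 : (∑ m, (if k = j ∧ l = m then C else 0) * Y i m)
        = if k = j then C * Y i l else 0 := by
      by_cases hkj : k = j
      · simp [hkj, ite_mul, zero_mul]
      · simp [hkj]
    rw [s1, s2]; abel
  constructor
  · have hb := hbX i j k l
    have expand : (b i j + Cinv * ∑ m, Y j m * Y i m) * X k l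
        - X k l * (b i j + Cinv * ∑ m, Y j m * Y i m)
        = (b i j * X k l - X k l * b i j)
          + Cinv * ((∑ m, Y j m * Y i m) * X k l - X k l * (∑ m, Y j m * Y i m)) := by
      have : X k l * (Cinv * ∑ m, Y j m * Y i m)
          = Cinv * (X k l * ∑ m, Y j m * Y i m) := by
        rw [← mul_assoc, ← hCinvX, mul_assoc]
      rw [add_mul, mul_add, this]; noncomm_ring
    rw [expand, hb, key]
    rw [mul_neg, mul_add]
    have t1 : Cinv * (if k = i then Y j l * C else 0) = if i = k then Y j l else 0 := by
      by_cases h : k = i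
      · simp only [h, if_pos rfl, if_pos]
        rw [← hCYe, ← mul_assoc, hC', one_mul]
      · rw [if_neg h, mul_zero, if_neg (fun hh => h hh.symm)]
    have t2 : Cinv * (if k = j then C * Y i l else 0) = if j = k then Y i l else 0 := by
      by_cases h : k = j
      · simp only [h, if_pos rfl, if_pos]
        rw [← mul_assoc, hC', one_mul]
      · rw [if_neg h, mul_zero, if_neg (fun hh => h hh.symm)]
    rw [t1, t2]; abel
  · have hb := sub_eq_zero.mp (hbY i j k l)
    have hS : (∑ m, Y j m * Y i m) * Y k l = Y k l * (∑ m, Y j m * Y i m) := by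
      rw [Finset.sum_mul, Finset.mul_sum]
      refine Finset.sum_congr rfl fun m _ => ?_
      have h1 := sub_eq_zero.mp (hYY j m k l)
      have h2 := sub_eq_zero.mp (hYY i m k l)
      rw [mul_assoc, h2, ← mul_assoc, h1, mul_assoc]
    rw [add_mul, mul_add, hb, ← mul_assoc, ← hCinvY, mul_assoc, hS]
    noncomm_ring
end

section
/- Let A be an associative ℂ-algebra with unit, n ≥ 1, and write [a,b] = ab - ba. Suppose given elements c^L_{ij}, X_{ij}, Y_{ij} ∈ A (1 ≤ i,j ≤ n) with c^L_{ij} = c^L_{ji}, and an invertible element C ∈ A, such that: [X_{ij},X_{kl}] = 0, [Y_{ij},Y_{kl}] = 0, [X_{ij},Y_{kl}] = δ_{ik}δ_{jl}C, C commutes with all listed elements, [c^L_{ij}, X_{kl}] = 0, and [c^L_{ij}, Y_{kl}] = δ_{jk}X_{il} + δ_{ik}X_{jl}. Then the elements ĉ^L_{ij} := c^L_{ij} - C^{-1}·Σ_{m=1}^{n} X_{jm}X_{im} satisfy [ĉ^L_{ij}, X_{kl}] = 0 and [ĉ^L_{ij}, Y_{kl}] = 0 for all i,j,k,l. -/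
/-- In an associative ℂ-algebra with Heisenberg generators `X_{ij}, Y_{ij}, C`
(`C` invertible, central) and symmetric generators `c^L_{ij}` with `[c^L_{ij}, X_{kl}] = 0`,
`[c^L_{ij}, Y_{kl}] = δ_{jk}X_{il} + δ_{ik}X_{jl}`, the shifted generators
`ĉ^L_{ij} = c^L_{ij} - C⁻¹ Σ_m X_{jm} X_{im}` commute with all `X_{kl}`, `Y_{kl}`. -/
theorem stmt_7 {A : Type*} [Ring A] [Algebra ℂ A] (n : ℕ) (hn : 1 ≤ n)
    (c X Y : Fin n → Fin n → A) (C Cinv : A)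
    (hcsym : ∀ i j, c i j = c j i)
    (hC : C * Cinv = 1) (hC' : Cinv * C = 1)
    (hXX : ∀ i j k l, X i j * X k l - X k l * X i j = 0)
    (hYY : ∀ i j k l, Y i j * Y k l - Y k l * Y i j = 0)
    (hXY : ∀ i j k l, X i j * Y k l - Y k l * X i j = if i = k ∧ j = l then C else 0)
    (hCX : ∀ i j, C * X i j - X i j * C = 0)
    (hCY : ∀ i j, C * Y i j - Y i j * C = 0)
    (hCc : ∀ i j, C * c i j - c i j * C = 0)
    (hcX : ∀ i j k l, c i j * X k l - X k l * c i j = 0)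
    (hcY : ∀ i j k l, c i j * Y k l - Y k l * c i j
      = (if j = k then X i l else 0) + (if i = k then X j l else 0)) :
    ∀ i j k l,
      ((c i j - Cinv * ∑ m, X j m * X i m) * X k l
          - X k l * (c i j - Cinv * ∑ m, X j m * X i m) = 0) ∧
      ((c i j - Cinv * ∑ m, X j m * X i m) * Y k l
          - Y k l * (c i j - Cinv * ∑ m, X j m * X i m) = 0) := by
  have hXX' : ∀ i j k l, X i j * X k l = X k l * X i j := fun i j k l =>
    sub_eq_zero.mp (hXX i j k l)
  have hCX' : ∀ i j, C * X i j = X i j * C := fun i j => sub_eq_zero.mp (hCX i j)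
  have hCY' : ∀ i j, C * Y i j = Y i j * C := fun i j => sub_eq_zero.mp (hCY i j)
  have hCinvX : ∀ i j, Cinv * X i j = X i j * Cinv := by
    intro i j
    have h : Cinv * (X i j * C) * Cinv = Cinv * (C * X i j) * Cinv := by rw [hCX']
    calc Cinv * X i j = Cinv * X i j * (C * Cinv) := by rw [hC, mul_one]
      _ = Cinv * (X i j * C) * Cinv := by noncomm_ring
      _ = Cinv * (C * X i j) * Cinv := h
      _ = (Cinv * C) * (X i j * Cinv) := by noncomm_ring
      _ = X i j * Cinv := by rw [hC', one_mul]
  have hCinvY : ∀ i j, Cinv * Y i j = Y i j * Cinv := by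
    intro i j
    have h : Cinv * (Y i j * C) * Cinv = Cinv * (C * Y i j) * Cinv := by rw [hCY']
    calc Cinv * Y i j = Cinv * Y i j * (C * Cinv) := by rw [hC, mul_one]
      _ = Cinv * (Y i j * C) * Cinv := by noncomm_ring
      _ = Cinv * (C * Y i j) * Cinv := h
      _ = (Cinv * C) * (Y i j * Cinv) := by noncomm_ring
      _ = Y i j * Cinv := by rw [hC', one_mul]
  intro i j k l
  have hSX : (∑ m, X j m * X i m) * X k l = X k l * ∑ m, X j m * X i m := by
    rw [Finset.sum_mul, Finset.mul_sum]
    refine Finset.sum_congr rfl fun m _ => ?_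
    rw [mul_assoc, hXX' i m k l, ← mul_assoc, hXX' j m k l, mul_assoc]
  constructor
  · have h1 : c i j * X k l = X k l * c i j := sub_eq_zero.mp (hcX i j k l)
    have e1 : Cinv * (∑ m, X j m * X i m) * X k l
        = X k l * (Cinv * ∑ m, X j m * X i m) := by
      rw [mul_assoc, hSX, ← mul_assoc, hCinvX, mul_assoc]
    rw [sub_mul, mul_sub, h1, e1]
    noncomm_ring
  · -- commutator of the sum with Y k l
    have key : ∀ m : Fin n, X j m * X i m * Y k l - Y k l * (X j m * X i m)
        = (if m = l then
            (if i = k then X j l * C else 0) + (if j = k then C * X i l else 0) else 0) := by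
      intro m
      have e : X j m * X i m * Y k l - Y k l * (X j m * X i m)
          = X j m * (X i m * Y k l - Y k l * X i m)
            + (X j m * Y k l - Y k l * X j m) * X i m := by noncomm_ring
      rw [e, hXY, hXY]
      by_cases hm : m = l
      · subst hm
        by_cases h1 : i = k <;> by_cases h2 : j = k <;> simp [h1, h2]
      · simp [hm]
    have hSY : (∑ m, X j m * X i m) * Y k l - Y k l * ∑ m, X j m * X i m
        = (if i = k then X j l * C else 0) + (if j = k then C * X i l else 0) := by
      rw [Finset.sum_mul, Finset.mul_sum, ← Finset.sum_sub_distrib,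
        Finset.sum_congr rfl fun m _ => key m]
      simp
    have hCinvS : Cinv * ((if i = k then X j l * C else 0)
          + (if j = k then C * X i l else 0))
        = (if i = k then X j l else 0) + (if j = k then X i l else 0) := by
      have e1 : Cinv * (X j l * C) = X j l := by
        rw [← mul_assoc, hCinvX, mul_assoc, hC', mul_one]
      have e2 : Cinv * (C * X i l) = X i l := by rw [← mul_assoc, hC', one_mul]
      split_ifs <;> simp [mul_add, e1, e2]
    have h2 := hcY i j k l
    have eY : Y k l * (Cinv * ∑ m, X j m * X i m)
        = Cinv * (Y k l * ∑ m, X j m * X i m) := by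
      rw [← mul_assoc, ← hCinvY, mul_assoc]
    have e3 : Cinv * (∑ m, X j m * X i m) * Y k l
          - Y k l * (Cinv * ∑ m, X j m * X i m)
        = Cinv * ((∑ m, X j m * X i m) * Y k l - Y k l * ∑ m, X j m * X i m) := by
      rw [mul_sub, eY, mul_assoc]
    have final : Cinv * (∑ m, X j m * X i m) * Y k l
          - Y k l * (Cinv * ∑ m, X j m * X i m)
        = (if j = k then X i l else 0) + (if i = k then X j l else 0) := by
      rw [e3, hSY, hCinvS, add_comm]
    calc (c i j - Cinv * ∑ m, X j m * X i m) * Y k l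
          - Y k l * (c i j - Cinv * ∑ m, X j m * X i m)
        = (c i j * Y k l - Y k l * c i j)
          - (Cinv * (∑ m, X j m * X i m) * Y k l
              - Y k l * (Cinv * ∑ m, X j m * X i m)) := by noncomm_ring
      _ = 0 := by rw [h2, final, sub_self]
end

section
/- Let A be an associative ℂ-algebra with unit, n ≥ 1, and write [a,b] = ab - ba. Suppose given elements b^R_{ij}, X_{ij}, Y_{ij} ∈ A (1 ≤ i,j ≤ n) with b^R_{ij} = b^R_{ji}, and an invertible element C ∈ A, such that: [X_{ij},X_{kl}] = 0, [Y_{ij},Y_{kl}] = 0, [X_{ij},Y_{kl}] = δ_{ik}δ_{jl}C, C commutes with all listed elements, [b^R_{ij}, X_{kl}] = 0, and [b^R_{ij}, Y_{kl}] = -δ_{il}X_{kj} - δ_{jl}X_{ki}. Then the elements b̂^R_{ij} := b^R_{ij} + C^{-1}·Σ_{m=1}^{n} X_{mi}X_{mj} satisfy [b̂^R_{ij}, X_{kl}] = 0 and [b̂^R_{ij}, Y_{kl}] = 0 for all i,j,k,l. -/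
/-- In an associative ℂ-algebra with Heisenberg generators `X_{ij}, Y_{ij}, C`
(`C` invertible, central) and symmetric generators `b^R_{ij}` with `[b^R_{ij}, X_{kl}] = 0`,
`[b^R_{ij}, Y_{kl}] = -δ_{il}X_{kj} - δ_{jl}X_{ki}`, the shifted generators
`b̂^R_{ij} = b^R_{ij} + C⁻¹ Σ_m X_{mi} X_{mj}` commute with all `X_{kl}`, `Y_{kl}`. -/
theorem stmt_8 {A : Type*} [Ring A] [Algebra ℂ A] (n : ℕ) (hn : 1 ≤ n)
    (b X Y : Fin n → Fin n → A) (C Cinv : A)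
    (hbsym : ∀ i j, b i j = b j i)
    (hC : C * Cinv = 1) (hC' : Cinv * C = 1)
    (hXX : ∀ i j k l, X i j * X k l - X k l * X i j = 0)
    (hYY : ∀ i j k l, Y i j * Y k l - Y k l * Y i j = 0)
    (hXY : ∀ i j k l, X i j * Y k l - Y k l * X i j = if i = k ∧ j = l then C else 0)
    (hCX : ∀ i j, C * X i j - X i j * C = 0)
    (hCY : ∀ i j, C * Y i j - Y i j * C = 0)
    (hCb : ∀ i j, C * b i j - b i j * C = 0)
    (hbX : ∀ i j k l, b i j * X k l - X k l * b i j = 0)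
    (hbY : ∀ i j k l, b i j * Y k l - Y k l * b i j
      = -(if i = l then X k j else 0) - (if j = l then X k i else 0)) :
    ∀ i j k l,
      ((b i j + Cinv * ∑ m, X m i * X m j) * X k l
          - X k l * (b i j + Cinv * ∑ m, X m i * X m j) = 0) ∧
      ((b i j + Cinv * ∑ m, X m i * X m j) * Y k l
          - Y k l * (b i j + Cinv * ∑ m, X m i * X m j) = 0) := by
  intro i j k l
  -- X's commute
  have hXc : ∀ i j k l, X i j * X k l = X k l * X i j := fun i j k l =>
    sub_eq_zero.mp (hXX i j k l)
  -- C commutes with X, hence Cinv does too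
  have hCXc : ∀ i j, C * X i j = X i j * C := fun i j => sub_eq_zero.mp (hCX i j)
  have hCYc : ∀ i j, C * Y i j = Y i j * C := fun i j => sub_eq_zero.mp (hCY i j)
  have hCinvX : ∀ i j, Cinv * X i j = X i j * Cinv := by
    intro i j
    calc Cinv * X i j = Cinv * X i j * (C * Cinv) := by rw [hC, mul_one]
    _ = Cinv * (X i j * C) * Cinv := by noncomm_ring
    _ = Cinv * (C * X i j) * Cinv := by rw [hCXc]
    _ = (Cinv * C) * (X i j * Cinv) := by noncomm_ring
    _ = X i j * Cinv := by rw [hC', one_mul]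
  have hCinvY : ∀ i j, Cinv * Y i j = Y i j * Cinv := by
    intro i j
    calc Cinv * Y i j = Cinv * Y i j * (C * Cinv) := by rw [hC, mul_one]
    _ = Cinv * (Y i j * C) * Cinv := by noncomm_ring
    _ = Cinv * (C * Y i j) * Cinv := by rw [hCYc]
    _ = (Cinv * C) * (Y i j * Cinv) := by noncomm_ring
    _ = Y i j * Cinv := by rw [hC', one_mul]
  set S : A := ∑ m, X m i * X m j with hS
  have hSX : S * X k l = X k l * S := by
    rw [hS, Finset.sum_mul, Finset.mul_sum]
    refine Finset.sum_congr rfl fun m _ => ?_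
    rw [mul_assoc, hXc m j k l, ← mul_assoc, hXc m i k l, mul_assoc]
  have hSY : S * Y k l - Y k l * S
      = (if j = l then X k i * C else 0) + (if i = l then C * X k j else 0) := by
    rw [hS, Finset.sum_mul, Finset.mul_sum, ← Finset.sum_sub_distrib]
    have each : ∀ m, X m i * X m j * Y k l - Y k l * (X m i * X m j)
        = (if m = k ∧ j = l then X m i * C else 0)
          + (if m = k ∧ i = l then C * X m j else 0) := by
      intro m
      have h1 : X m j * Y k l = Y k l * X m j + (if m = k ∧ j = l then C else 0) :=
        sub_eq_iff_eq_add'.mp (hXY m j k l)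
      have h2 : X m i * Y k l = Y k l * X m i + (if m = k ∧ i = l then C else 0) :=
        sub_eq_iff_eq_add'.mp (hXY m i k l)
      calc X m i * X m j * Y k l - Y k l * (X m i * X m j)
          = X m i * (X m j * Y k l) - Y k l * (X m i * X m j) := by rw [mul_assoc]
        _ = X m i * (Y k l * X m j) + X m i * (if m = k ∧ j = l then C else 0)
              - Y k l * (X m i * X m j) := by rw [h1, mul_add]
        _ = (X m i * Y k l) * X m j + X m i * (if m = k ∧ j = l then C else 0)
              - Y k l * (X m i * X m j) := by noncomm_ring
        _ = (Y k l * X m i + (if m = k ∧ i = l then C else 0)) * X m j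
              + X m i * (if m = k ∧ j = l then C else 0)
              - Y k l * (X m i * X m j) := by rw [h2]
        _ = X m i * (if m = k ∧ j = l then C else 0)
              + (if m = k ∧ i = l then C else 0) * X m j := by noncomm_ring
        _ = (if m = k ∧ j = l then X m i * C else 0)
              + (if m = k ∧ i = l then C * X m j else 0) := by
            rw [mul_ite, ite_mul, mul_zero, zero_mul]
    rw [Finset.sum_congr rfl fun m _ => each m, Finset.sum_add_distrib]
    simp [ite_and, Finset.sum_ite_eq', Finset.sum_ite_eq]
  constructor
  · have h1 : Cinv * S * X k l = X k l * (Cinv * S) := by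
      rw [mul_assoc, hSX, ← mul_assoc, hCinvX, mul_assoc]
    have hb := sub_eq_zero.mp (hbX i j k l)
    rw [add_mul, mul_add, h1, hb]
    abel
  · have h1 : Cinv * S * Y k l - Y k l * (Cinv * S)
        = (if j = l then X k i else 0) + (if i = l then X k j else 0) := by
      have : Cinv * S * Y k l - Y k l * (Cinv * S) = Cinv * (S * Y k l - Y k l * S) := by
        rw [mul_sub, mul_assoc]
        congr 1
        rw [← mul_assoc, ← hCinvY, mul_assoc]
      have hA : Cinv * (X k i * C) = X k i := by
        rw [← mul_assoc, hCinvX, mul_assoc, hC', mul_one]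
      have hB : Cinv * (C * X k j) = X k j := by
        rw [← mul_assoc, hC', one_mul]
      rw [this, hSY, mul_add]
      simp only [mul_ite, mul_zero, hA, hB]
    have hb := hbY i j k l
    rw [add_mul, mul_add]
    have expand : b i j * Y k l + Cinv * S * Y k l - (Y k l * b i j + Y k l * (Cinv * S))
        = (b i j * Y k l - Y k l * b i j) + (Cinv * S * Y k l - Y k l * (Cinv * S)) := by noncomm_ring
    rw [expand, hb, h1]
    generalize (if i = l then X k j else 0) = P
    generalize (if j = l then X k i else 0) = Q
    abel
end

section
/- Let A be an associative ℂ-algebra with unit, n ≥ 1, and write [a,b] = ab - ba. Suppose given elements c^R_{ij}, X_{ij}, Y_{ij} ∈ A (1 ≤ i,j ≤ n) with c^R_{ij} = c^R_{ji}, and an invertible element C ∈ A, such that: [X_{ij},X_{kl}] = 0, [Y_{ij},Y_{kl}] = 0, [X_{ij},Y_{kl}] = δ_{ik}δ_{jl}C, C commutes with all listed elements, [c^R_{ij}, Y_{kl}] = 0, and [c^R_{ij}, X_{kl}] = -δ_{il}Y_{kj} - δ_{jl}Y_{ki}. Then the elements ĉ^R_{ij} := c^R_{ij} - C^{-1}·Σ_{m=1}^{n}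 Y_{mi}Y_{mj} satisfy [ĉ^R_{ij}, X_{kl}] = 0 and [ĉ^R_{ij}, Y_{kl}] = 0 for all i,j,k,l. -/
/-- In an associative ℂ-algebra with Heisenberg generators `X_{ij}, Y_{ij}, C`
(`C` invertible, central) and symmetric generators `c^R_{ij}` with `[c^R_{ij}, Y_{kl}] = 0`,
`[c^R_{ij}, X_{kl}] = -δ_{il}Y_{kj} - δ_{jl}Y_{ki}`, the shifted generators
`ĉ^R_{ij} = c^R_{ij} - C⁻¹ Σ_m Y_{mi} Y_{mj}` commute with all `X_{kl}`, `Y_{kl}`. -/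
theorem stmt_9 {A : Type*} [Ring A] [Algebra ℂ A] (n : ℕ) (hn : 1 ≤ n)
    (c X Y : Fin n → Fin n → A) (C Cinv : A)
    (hcsym : ∀ i j, c i j = c j i)
    (hC : C * Cinv = 1) (hC' : Cinv * C = 1)
    (hXX : ∀ i j k l, X i j * X k l - X k l * X i j = 0)
    (hYY : ∀ i j k l, Y i j * Y k l - Y k l * Y i j = 0)
    (hXY : ∀ i j k l, X i j * Y k l - Y k l * X i j = if i = k ∧ j = l then C else 0)
    (hCX : ∀ i j, C * X i j - X i j * C = 0)
    (hCY : ∀ i j, C * Y i j - Y i j * C = 0)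
    (hCc : ∀ i j, C * c i j - c i j * C = 0)
    (hcY : ∀ i j k l, c i j * Y k l - Y k l * c i j = 0)
    (hcX : ∀ i j k l, c i j * X k l - X k l * c i j
      = -(if i = l then Y k j else 0) - (if j = l then Y k i else 0)) :
    ∀ i j k l,
      ((c i j - Cinv * ∑ m, Y m i * Y m j) * X k l
          - X k l * (c i j - Cinv * ∑ m, Y m i * Y m j) = 0) ∧
      ((c i j - Cinv * ∑ m, Y m i * Y m j) * Y k l
          - Y k l * (c i j - Cinv * ∑ m, Y m i * Y m j) = 0) := by
  -- Cinv commutes with anything C commutes with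
  have swap : ∀ a : A, C * a - a * C = 0 → Cinv * a = a * Cinv := by
    intro a h
    have h' : C * a = a * C := by linear_combination (norm := noncomm_ring) h
    calc Cinv * a = Cinv * a * (C * Cinv) := by rw [hC, mul_one]
      _ = Cinv * (a * C) * Cinv := by noncomm_ring
      _ = Cinv * (C * a) * Cinv := by rw [h']
      _ = a * Cinv := by rw [← mul_assoc, hC', one_mul]
  have hCinvX : ∀ k l, Cinv * X k l = X k l * Cinv := fun k l => swap _ (hCX k l)
  have hCinvY : ∀ k l, Cinv * Y k l = Y k l * Cinv := fun k l => swap _ (hCY k l)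
  -- rewrite forms of the commutation relations
  have hYX : ∀ i j k l, Y k l * X i j = X i j * Y k l - (if i = k ∧ j = l then C else 0) := by
    intro i j k l
    linear_combination (norm := noncomm_ring) - hXY i j k l
  intro i j k l
  constructor
  · -- X part
    have sumX : (∑ m, Y m i * Y m j) * X k l - X k l * (∑ m, Y m i * Y m j)
        = -(if i = l then C * Y k j else 0) - (if j = l then Y k i * C else 0) := by
      rw [Finset.sum_mul, Finset.mul_sum, ← Finset.sum_sub_distrib]
      have term : ∀ m, Y m i * Y m j * X k l - X k l * (Y m i * Y m j)
          = -((if k = m ∧ l = i then C else 0) * Y m j)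
            - Y m i * (if k = m ∧ l = j then C else 0) := by
        intro m
        rw [mul_assoc, hYX k l m j, mul_sub, ← mul_assoc, hYX k l m i, sub_mul]
        noncomm_ring
      rw [Finset.sum_congr rfl (fun m _ => term m)]
      rw [Finset.sum_sub_distrib, Finset.sum_neg_distrib]
      simp only [ite_mul, mul_ite, zero_mul, mul_zero, ite_and]
      rw [Finset.sum_ite_eq, Finset.sum_ite_eq]
      simp [eq_comm]
    have e1 : X k l * (Cinv * ∑ m, Y m i * Y m j)
        = Cinv * (X k l * ∑ m, Y m i * Y m j) := by
      rw [← mul_assoc, ← hCinvX, mul_assoc]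
    have expand : (c i j - Cinv * ∑ m, Y m i * Y m j) * X k l
          - X k l * (c i j - Cinv * ∑ m, Y m i * Y m j)
        = (c i j * X k l - X k l * c i j)
          - Cinv * ((∑ m, Y m i * Y m j) * X k l - X k l * (∑ m, Y m i * Y m j)) := by
      rw [sub_mul, mul_sub, e1]; noncomm_ring
    rw [expand, hcX, sumX]
    have c1 : ∀ p q, Cinv * (C * Y p q) = Y p q := by
      intro p q; rw [← mul_assoc, hC', one_mul]
    have c2 : ∀ p q, Cinv * (Y p q * C) = Y p q := by
      intro p q; rw [← mul_assoc, hCinvY, mul_assoc, hC', mul_one]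
    by_cases hil : i = l <;> by_cases hjl : j = l <;>
      simp [hil, hjl, mul_sub, mul_neg, c1, c2] <;> abel
  · -- Y part
    have hYY' : ∀ a b p q, Y a b * Y p q = Y p q * Y a b := by
      intro a b p q
      linear_combination (norm := noncomm_ring) hYY a b p q
    have sumY : (∑ m, Y m i * Y m j) * Y k l = Y k l * ∑ m, Y m i * Y m j := by
      rw [Finset.sum_mul, Finset.mul_sum]
      refine Finset.sum_congr rfl fun m _ => ?_
      rw [mul_assoc, hYY' m j k l, ← mul_assoc, hYY' m i k l, mul_assoc]
    have e1 : Y k l * (Cinv * ∑ m, Y m i * Y m j)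
        = Cinv * ((∑ m, Y m i * Y m j) * Y k l) := by
      rw [← mul_assoc, ← hCinvY, mul_assoc, sumY]
    have hc := hcY i j k l
    rw [sub_mul, mul_sub, e1, mul_assoc]
    linear_combination (norm := noncomm_ring) hc
end

section
/- Let L be a Lie algebra over ℂ and n ≥ 1. Suppose elements a^{L}_{ij}, a^{R}_{ij}, b^{L}_{ij}, b^{R}_{ij}, c^{L}_{ij}, c^{R}_{ij}, X_{ij}, Y_{ij}, C ∈ L (1 ≤ i,j ≤ n, with b^{L,R}_{ij} = b^{L,R}_{ji} and c^{L,R}_{ij} = c^{L,R}_{ji}) satisfy: the two symplectic families of relations [b^{L,R}_{ij},b^{L,R}_{kl}] = [c^{L,R}_{ij},c^{L,R}_{kl}] = 0, [a^{L,R}_{ij},a^{L,R}_{kl}] = δ_{jk}a^{L,R}_{il} - δ_{il}a^{L,R}_{kj}, [b^{L,R}_{ij},c^{L,R}_{kl}] = δ_{ik}a^{L,R}_{jl} + δ_{jl}a^{L,R}_{ik} + δ_{jk}a^{L,R}_{il} + δ_{il}a^{L,R}_{jk}, [a^{L,R}_{ij},b^{L,R}_{kl}] = δ_{jk}b^{L,R}_{il}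 + δ_{jl}b^{L,R}_{ik}, [a^{L,R}_{ij},c^{L,R}_{kl}] = -δ_{ik}c^{L,R}_{jl} - δ_{il}c^{L,R}_{jk}, with all left generators commuting with all right generators; the Heisenberg relations [X_{ij},X_{kl}] = [Y_{ij},Y_{kl}] = 0, [X_{ij},Y_{kl}] = δ_{ik}δ_{jl}C with C central; the mixed relations [a^L_{ij},X_{kl}] = -δ_{ik}X_{jl}, [a^L_{ij},Y_{kl}] = δ_{jk}Y_{il}, [a^R_{ij},X_{kl}] = δ_{jl}X_{ki}, [a^R_{ij},Y_{kl}] = -δ_{il}Y_{kj}, [b^L_{ij},Y_{kl}] = 0, [b^L_{ij},X_{kl}] = δ_{jk}Y_{il} + δ_{ik}Y_{jl}, [c^L_{ij},X_{kl}] = 0, [c^L_{ij},Y_{kl}] = δ_{jk}X_{il} + δ_{ik}X_{jl}, [b^R_{ij},X_{kl}] = 0, [b^R_{ij},Y_{kl}] = -δ_{il}X_{kj} - δ_{jl}X_{ki}, [c^R_{ij},Y_{kl}] = 0, [c^R_{ij},X_{kl}] = -δ_{il}Y_{kj} - δ_{jl}Y_{ki}. Let 𝔨 be the ℂ-linear span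 of the elements a^{L}_{ij} - a^{L}_{ji}, a^{R}_{ij} - a^{R}_{ji}, b^{L}_{ij} - c^{L}_{ij}, b^{R}_{ij} - c^{R}_{ij}, and X_{ij} - i·Y_{ij} (i = √(-1)), and let 𝒜 ⊆ 𝔨 be the span of the elements X_{ij} - i·Y_{ij}. Then 𝔨 is closed under the Lie bracket (i.e. is a Lie subalgebra of L), and 𝒜 is an abelian Lie ideal of 𝔨. -/
private theorem lie_mem_span_aux {L : Type*} [LieRing L] [LieAlgebra ℂ L] {s t : Set L}
    {M : Submodule ℂ L} (h : ∀ u ∈ s, ∀ v ∈ t, ⁅u, v⁆ ∈ M) :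
    ∀ u ∈ Submodule.span ℂ s, ∀ v ∈ Submodule.span ℂ t, ⁅u, v⁆ ∈ M := by
  intro u hu v hv
  induction hu using Submodule.span_induction with
  | mem x hx =>
      induction hv using Submodule.span_induction with
      | mem y hy => exact h x hx y hy
      | zero => rw [lie_zero]; exact zero_mem _
      | add y z hy hz py pz => rw [lie_add]; exact add_mem py pz
      | smul r y hy py => rw [lie_smul]; exact Submodule.smul_mem _ _ py
  | zero => rw [zero_lie]; exact zero_mem _
  | add x y hx hy px py => rw [add_lie]; exact add_mem px py
  | smul r x hx px => rw [smul_lie]; exact Submodule.smul_mem _ _ px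

private theorem lie_zero_span_aux {L : Type*} [LieRing L] [LieAlgebra ℂ L] {s t : Set L}
    (h : ∀ u ∈ s, ∀ v ∈ t, ⁅u, v⁆ = 0) :
    ∀ u ∈ Submodule.span ℂ s, ∀ v ∈ Submodule.span ℂ t, ⁅u, v⁆ = 0 := by
  intro u hu v hv
  induction hu using Submodule.span_induction with
  | mem x hx =>
      induction hv using Submodule.span_induction with
      | mem y hy => exact h x hx y hy
      | zero => rw [lie_zero]
      | add y z hy hz py pz => rw [lie_add, py, pz, add_zero]
      | smul r y hy py => rw [lie_smul, py, smul_zero]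
  | zero => rw [zero_lie]
  | add x y hx hy px py => rw [add_lie, px, py, add_zero]
  | smul r x hx px => rw [smul_lie, px, smul_zero]

set_option maxHeartbeats 2000000 in
/-- The spherical subalgebra Lemma for `𝔥𝔰𝔭_{2ℓ+2}`: the span `𝔨` of the elements
`a^{L,R}_{ij} - a^{L,R}_{ji}`, `b^{L,R}_{ij} - c^{L,R}_{ij}` and `X_{ij} - i·Y_{ij}`
is closed under the Lie bracket, and the span `𝒜` of the elements `X_{ij} - i·Y_{ij}`
is an abelian Lie ideal of `𝔨`. -/
theorem stmt_13 {L : Type*} [LieRing L] [LieAlgebra ℂ L] (n : ℕ) (hn : 1 ≤ n)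
    (aL aR bL bR cL cR X Y : Fin n → Fin n → L) (C : L)
    (hbLsym : ∀ i j, bL i j = bL j i) (hbRsym : ∀ i j, bR i j = bR j i)
    (hcLsym : ∀ i j, cL i j = cL j i) (hcRsym : ∀ i j, cR i j = cR j i)
    -- symplectic relations, left copy
    (hbLbL : ∀ i j k l, ⁅bL i j, bL k l⁆ = 0)
    (hcLcL : ∀ i j k l, ⁅cL i j, cL k l⁆ = 0)
    (haLaL : ∀ i j k l, ⁅aL i j, aL k l⁆
      = (if j = k then aL i l else 0) - (if i = l then aL k j else 0))
    (hbLcL : ∀ i j k l, ⁅bL i j, cL k l⁆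
      = (if i = k then aL j l else 0) + (if j = l then aL i k else 0)
        + (if j = k then aL i l else 0) + (if i = l then aL j k else 0))
    (haLbL : ∀ i j k l, ⁅aL i j, bL k l⁆
      = (if j = k then bL i l else 0) + (if j = l then bL i k else 0))
    (haLcL : ∀ i j k l, ⁅aL i j, cL k l⁆
      = -(if i = k then cL j l else 0) - (if i = l then cL j k else 0))
    -- symplectic relations, right copy
    (hbRbR : ∀ i j k l, ⁅bR i j, bR k l⁆ = 0)
    (hcRcR : ∀ i j k l, ⁅cR i j, cR k l⁆ = 0)
    (haRaR : ∀ i j k l, ⁅aR i j, aR k l⁆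
      = (if j = k then aR i l else 0) - (if i = l then aR k j else 0))
    (hbRcR : ∀ i j k l, ⁅bR i j, cR k l⁆
      = (if i = k then aR j l else 0) + (if j = l then aR i k else 0)
        + (if j = k then aR i l else 0) + (if i = l then aR j k else 0))
    (haRbR : ∀ i j k l, ⁅aR i j, bR k l⁆
      = (if j = k then bR i l else 0) + (if j = l then bR i k else 0))
    (haRcR : ∀ i j k l, ⁅aR i j, cR k l⁆
      = -(if i = k then cR j l else 0) - (if i = l then cR j k else 0))
    -- left generators commute with right generators
    (haLaR : ∀ i j k l, ⁅aL i j, aR k l⁆ = 0)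
    (haLbR : ∀ i j k l, ⁅aL i j, bR k l⁆ = 0)
    (haLcR : ∀ i j k l, ⁅aL i j, cR k l⁆ = 0)
    (hbLaR : ∀ i j k l, ⁅bL i j, aR k l⁆ = 0)
    (hbLbR : ∀ i j k l, ⁅bL i j, bR k l⁆ = 0)
    (hbLcR : ∀ i j k l, ⁅bL i j, cR k l⁆ = 0)
    (hcLaR : ∀ i j k l, ⁅cL i j, aR k l⁆ = 0)
    (hcLbR : ∀ i j k l, ⁅cL i j, bR k l⁆ = 0)
    (hcLcR : ∀ i j k l, ⁅cL i j, cR k l⁆ = 0)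
    -- Heisenberg relations with C central
    (hXX : ∀ i j k l, ⁅X i j, X k l⁆ = 0)
    (hYY : ∀ i j k l, ⁅Y i j, Y k l⁆ = 0)
    (hXY : ∀ i j k l, ⁅X i j, Y k l⁆ = if i = k ∧ j = l then C else 0)
    (hCX : ∀ i j, ⁅C, X i j⁆ = 0) (hCY : ∀ i j, ⁅C, Y i j⁆ = 0)
    (hCaL : ∀ i j, ⁅C, aL i j⁆ = 0) (hCaR : ∀ i j, ⁅C, aR i j⁆ = 0)
    (hCbL : ∀ i j, ⁅C, bL i j⁆ = 0) (hCbR : ∀ i j, ⁅C, bR i j⁆ = 0)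
    (hCcL : ∀ i j, ⁅C, cL i j⁆ = 0) (hCcR : ∀ i j, ⁅C, cR i j⁆ = 0)
    -- mixed relations
    (haLX : ∀ i j k l, ⁅aL i j, X k l⁆ = -(if i = k then X j l else 0))
    (haLY : ∀ i j k l, ⁅aL i j, Y k l⁆ = (if j = k then Y i l else 0))
    (haRX : ∀ i j k l, ⁅aR i j, X k l⁆ = (if j = l then X k i else 0))
    (haRY : ∀ i j k l, ⁅aR i j, Y k l⁆ = -(if i = l then Y k j else 0))
    (hbLY : ∀ i j k l, ⁅bL i j, Y k l⁆ = 0)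
    (hbLX : ∀ i j k l, ⁅bL i j, X k l⁆
      = (if j = k then Y i l else 0) + (if i = k then Y j l else 0))
    (hcLX : ∀ i j k l, ⁅cL i j, X k l⁆ = 0)
    (hcLY : ∀ i j k l, ⁅cL i j, Y k l⁆
      = (if j = k then X i l else 0) + (if i = k then X j l else 0))
    (hbRX : ∀ i j k l, ⁅bR i j, X k l⁆ = 0)
    (hbRY : ∀ i j k l, ⁅bR i j, Y k l⁆
      = -(if i = l then X k j else 0) - (if j = l then X k i else 0))
    (hcRY : ∀ i j k l, ⁅cR i j, Y k l⁆ = 0)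
    (hcRX : ∀ i j k l, ⁅cR i j, X k l⁆
      = -(if i = l then Y k j else 0) - (if j = l then Y k i else 0))
    -- the spherical subspace 𝔨 and its subspace 𝒜
    (K A : Submodule ℂ L)
    (hK : K = Submodule.span ℂ
      ((Set.range fun p : Fin n × Fin n => aL p.1 p.2 - aL p.2 p.1)
        ∪ (Set.range fun p : Fin n × Fin n => aR p.1 p.2 - aR p.2 p.1)
        ∪ (Set.range fun p : Fin n × Fin n => bL p.1 p.2 - cL p.1 p.2)
        ∪ (Set.range fun p : Fin n × Fin n => bR p.1 p.2 - cR p.1 p.2)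
        ∪ (Set.range fun p : Fin n × Fin n => X p.1 p.2 - Complex.I • Y p.1 p.2)))
    (hA : A = Submodule.span ℂ
      (Set.range fun p : Fin n × Fin n => X p.1 p.2 - Complex.I • Y p.1 p.2)) :
    (∀ u ∈ K, ∀ v ∈ K, ⁅u, v⁆ ∈ K) ∧
    A ≤ K ∧
    (∀ u ∈ A, ∀ v ∈ A, ⁅u, v⁆ = 0) ∧
    (∀ u ∈ K, ∀ v ∈ A, ⁅u, v⁆ ∈ A) := by
  classical
  have m1 : ∀ i j, aL i j - aL j i ∈ K := fun i j => by
    rw [hK]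
    exact Submodule.subset_span (Set.mem_union_left _ (Set.mem_union_left _
      (Set.mem_union_left _ (Set.mem_union_left _ ⟨(i, j), rfl⟩))))
  have m2 : ∀ i j, aR i j - aR j i ∈ K := fun i j => by
    rw [hK]
    exact Submodule.subset_span (Set.mem_union_left _ (Set.mem_union_left _
      (Set.mem_union_left _ (Set.mem_union_right _ ⟨(i, j), rfl⟩))))
  have m3 : ∀ i j, bL i j - cL i j ∈ K := fun i j => by
    rw [hK]
    exact Submodule.subset_span (Set.mem_union_left _ (Set.mem_union_left _
      (Set.mem_union_right _ ⟨(i, j), rfl⟩)))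
  have m4 : ∀ i j, bR i j - cR i j ∈ K := fun i j => by
    rw [hK]
    exact Submodule.subset_span (Set.mem_union_left _ (Set.mem_union_right _ ⟨(i, j), rfl⟩))
  have mA : ∀ i j, X i j - Complex.I • Y i j ∈ A := fun i j => by
    rw [hA]; exact Submodule.subset_span ⟨(i, j), rfl⟩
  have hAK : A ≤ K := by
    rw [hA, hK]; exact Submodule.span_mono Set.subset_union_right
  have hite : ∀ (P : Prop) [Decidable P] {x : L} {M : Submodule ℂ L},
      x ∈ M → (if P then x else 0) ∈ M := by
    intro P _ x M hx
    split
    · exact hx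
    · exact zero_mem _
  have rz : ∀ {x y : L}, ⁅x, y⁆ = 0 → ⁅y, x⁆ = 0 := fun h => by
    rw [← lie_skew, h, neg_zero]
  have bz : ∀ (u1 u2 v1 v2 : L), ⁅u1, v1⁆ = 0 → ⁅u1, v2⁆ = 0 → ⁅u2, v1⁆ = 0 →
      ⁅u2, v2⁆ = 0 → ⁅u1 - u2, v1 - v2⁆ = (0 : L) := by
    intro u1 u2 v1 v2 h1 h2 h3 h4
    rw [lie_sub, sub_lie, sub_lie, h1, h2, h3, h4]
    abel
  -- generic `a`-`a` bracket
  have b11 : ∀ (a : Fin n → Fin n → L),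
      (∀ i j k l, ⁅a i j, a k l⁆ = (if j = k then a i l else 0) - (if i = l then a k j else 0)) →
      (∀ i j, a i j - a j i ∈ K) → ∀ i j k l : Fin n,
      ⁅a i j - a j i, a k l - a l k⁆ ∈ K := by
    intro a ha hm i j k l
    have e : ⁅a i j - a j i, a k l - a l k⁆
        = ((if j = k then a i l - a l i else 0) + (if i = l then a j k - a k j else 0))
          - ((if j = l then a i k - a k i else 0) + (if i = k then a j l - a l j else 0)) := by
      simp only [lie_sub, sub_lie, ha]
      split_ifs <;> abel
    rw [e]
    exact sub_mem (add_mem (hite _ (hm _ _)) (hite _ (hm _ _)))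
      (add_mem (hite _ (hm _ _)) (hite _ (hm _ _)))
  -- generic `a`-`(b-c)` bracket
  have bAB : ∀ (a b c : Fin n → Fin n → L),
      (∀ i j k l, ⁅a i j, b k l⁆ = (if j = k then b i l else 0) + (if j = l then b i k else 0)) →
      (∀ i j k l, ⁅a i j, c k l⁆ = -(if i = k then c j l else 0) - (if i = l then c j k else 0)) →
      (∀ i j, b i j - c i j ∈ K) → ∀ i j k l : Fin n,
      ⁅a i j - a j i, b k l - c k l⁆ ∈ K := by
    intro a b c hab hac hm i j k l
    have e : ⁅a i j - a j i, b k l - c k l⁆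
        = ((if j = k then b i l - c i l else 0) + (if j = l then b i k - c i k else 0))
          - ((if i = k then b j l - c j l else 0) + (if i = l then b j k - c j k else 0)) := by
      simp only [lie_sub, sub_lie, hab, hac]
      split_ifs <;> abel
    rw [e]
    exact sub_mem (add_mem (hite _ (hm _ _)) (hite _ (hm _ _)))
      (add_mem (hite _ (hm _ _)) (hite _ (hm _ _)))
  -- generic `(b-c)`-`(b-c)` bracket
  have bBB : ∀ (a b c : Fin n → Fin n → L),
      (∀ i j k l, ⁅b i j, b k l⁆ = 0) → (∀ i j k l, ⁅c i j, c k l⁆ = 0) →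
      (∀ i j k l, ⁅b i j, c k l⁆ = (if i = k then a j l else 0) + (if j = l then a i k else 0)
        + (if j = k then a i l else 0) + (if i = l then a j k else 0)) →
      (∀ i j, a i j - a j i ∈ K) → ∀ i j k l : Fin n,
      ⁅b i j - c i j, b k l - c k l⁆ ∈ K := by
    intro a b c hbb hcc hbc hm i j k l
    have hcb : ∀ i j k l, ⁅c i j, b k l⁆
        = -((if i = k then a l j else 0) + (if j = l then a k i else 0)
          + (if i = l then a k j else 0) + (if j = k then a l i else 0)) := by
      intro i j k l
      rw [← lie_skew, hbc k l i j]
      simp only [show (k = i) = (i = k) from propext eq_comm,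
        show (l = j) = (j = l) from propext eq_comm,
        show (l = i) = (i = l) from propext eq_comm,
        show (k = j) = (j = k) from propext eq_comm]
    have e : ⁅b i j - c i j, b k l - c k l⁆
        = ((if i = k then a l j - a j l else 0) + (if j = l then a k i - a i k else 0)
          + (if j = k then a l i - a i l else 0) + (if i = l then a k j - a j k else 0)) := by
      simp only [lie_sub, sub_lie, hbb, hcc, hbc, hcb]
      split_ifs <;> abel
    rw [e]
    exact add_mem (add_mem (add_mem (hite _ (hm _ _)) (hite _ (hm _ _)))
      (hite _ (hm _ _))) (hite _ (hm _ _))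
  -- brackets with the `Z = X - i•Y` family
  have b1Z : ∀ i j k l : Fin n, ⁅aL i j - aL j i, X k l - Complex.I • Y k l⁆ ∈ A := by
    intro i j k l
    have e : ⁅aL i j - aL j i, X k l - Complex.I • Y k l⁆
        = (if j = k then X i l - Complex.I • Y i l else 0)
          - (if i = k then X j l - Complex.I • Y j l else 0) := by
      simp only [lie_sub, sub_lie, lie_smul, haLX, haLY]
      split_ifs <;> simp only [smul_sub, smul_zero] <;> abel
    rw [e]
    exact sub_mem (hite _ (mA _ _)) (hite _ (mA _ _))
  have b2Z : ∀ i j k l : Fin n, ⁅aR i j - aR j i, X k l - Complex.I • Y k l⁆ ∈ A := by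
    intro i j k l
    have e : ⁅aR i j - aR j i, X k l - Complex.I • Y k l⁆
        = (if j = l then X k i - Complex.I • Y k i else 0)
          - (if i = l then X k j - Complex.I • Y k j else 0) := by
      simp only [lie_sub, sub_lie, lie_smul, haRX, haRY]
      split_ifs <;> simp only [smul_sub, smul_zero, smul_neg] <;> abel
    rw [e]
    exact sub_mem (hite _ (mA _ _)) (hite _ (mA _ _))
  have b3Z : ∀ i j k l : Fin n, ⁅bL i j - cL i j, X k l - Complex.I • Y k l⁆ ∈ A := by
    intro i j k l
    have e : ⁅bL i j - cL i j, X k l - Complex.I • Y k l⁆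
        = Complex.I • ((if j = k then X i l - Complex.I • Y i l else 0)
          + (if i = k then X j l - Complex.I • Y j l else 0)) := by
      simp only [lie_sub, sub_lie, lie_smul, hbLX, hbLY, hcLX, hcLY]
      split_ifs <;>
        simp only [smul_add, smul_sub, smul_zero, smul_smul, Complex.I_mul_I, neg_one_smul] <;>
        abel
    rw [e]
    exact Submodule.smul_mem _ _ (add_mem (hite _ (mA _ _)) (hite _ (mA _ _)))
  have b4Z : ∀ i j k l : Fin n, ⁅bR i j - cR i j, X k l - Complex.I • Y k l⁆ ∈ A := by
    intro i j k l
    have e : ⁅bR i j - cR i j, X k l - Complex.I • Y k l⁆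
        = Complex.I • ((if i = l then X k j - Complex.I • Y k j else 0)
          + (if j = l then X k i - Complex.I • Y k i else 0)) := by
      simp only [lie_sub, sub_lie, lie_smul, hbRX, hbRY, hcRX, hcRY]
      split_ifs <;>
        simp only [smul_add, smul_sub, smul_zero, smul_neg, smul_smul, Complex.I_mul_I,
          neg_one_smul] <;>
        abel
    rw [e]
    exact Submodule.smul_mem _ _ (add_mem (hite _ (mA _ _)) (hite _ (mA _ _)))
  have hYX : ∀ i j k l, ⁅Y i j, X k l⁆ = -(if i = k ∧ j = l then C else 0) := by
    intro i j k l
    rw [← lie_skew, hXY k l i j]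
    by_cases h : i = k ∧ j = l
    · rw [if_pos ⟨h.1.symm, h.2.symm⟩, if_pos h]
    · rw [if_neg fun hc => h ⟨hc.1.symm, hc.2.symm⟩, if_neg h]
  have bZZ : ∀ i j k l : Fin n,
      ⁅X i j - Complex.I • Y i j, X k l - Complex.I • Y k l⁆ = 0 := by
    intro i j k l
    simp only [lie_sub, sub_lie, lie_smul, smul_lie, hXX, hYY, hXY, hYX, smul_neg, smul_zero,
      smul_smul, sub_zero, zero_sub, neg_neg, add_zero, zero_add]
    abel
  -- brackets of generators lie in K
  have key : ∀ u ∈ ((Set.range fun p : Fin n × Fin n => aL p.1 p.2 - aL p.2 p.1)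
        ∪ (Set.range fun p : Fin n × Fin n => aR p.1 p.2 - aR p.2 p.1)
        ∪ (Set.range fun p : Fin n × Fin n => bL p.1 p.2 - cL p.1 p.2)
        ∪ (Set.range fun p : Fin n × Fin n => bR p.1 p.2 - cR p.1 p.2)
        ∪ (Set.range fun p : Fin n × Fin n => X p.1 p.2 - Complex.I • Y p.1 p.2)),
      ∀ v ∈ ((Set.range fun p : Fin n × Fin n => aL p.1 p.2 - aL p.2 p.1)
        ∪ (Set.range fun p : Fin n × Fin n => aR p.1 p.2 - aR p.2 p.1)
        ∪ (Set.range fun p : Fin n × Fin n => bL p.1 p.2 - cL p.1 p.2)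
        ∪ (Set.range fun p : Fin n × Fin n => bR p.1 p.2 - cR p.1 p.2)
        ∪ (Set.range fun p : Fin n × Fin n => X p.1 p.2 - Complex.I • Y p.1 p.2)),
      ⁅u, v⁆ ∈ K := by
    rintro u ((((⟨p, rfl⟩ | ⟨p, rfl⟩) | ⟨p, rfl⟩) | ⟨p, rfl⟩) | ⟨p, rfl⟩)
        v ((((⟨q, rfl⟩ | ⟨q, rfl⟩) | ⟨q, rfl⟩) | ⟨q, rfl⟩) | ⟨q, rfl⟩)
    · exact b11 aL haLaL m1 p.1 p.2 q.1 q.2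
    · rw [bz _ _ _ _ (haLaR _ _ _ _) (haLaR _ _ _ _) (haLaR _ _ _ _) (haLaR _ _ _ _)]
      exact zero_mem _
    · exact bAB aL bL cL haLbL haLcL m3 p.1 p.2 q.1 q.2
    · rw [bz _ _ _ _ (haLbR _ _ _ _) (haLcR _ _ _ _) (haLbR _ _ _ _) (haLcR _ _ _ _)]
      exact zero_mem _
    · exact hAK (b1Z p.1 p.2 q.1 q.2)
    · rw [bz _ _ _ _ (rz (haLaR _ _ _ _)) (rz (haLaR _ _ _ _)) (rz (haLaR _ _ _ _))
        (rz (haLaR _ _ _ _))]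
      exact zero_mem _
    · exact b11 aR haRaR m2 p.1 p.2 q.1 q.2
    · rw [bz _ _ _ _ (rz (hbLaR _ _ _ _)) (rz (hcLaR _ _ _ _)) (rz (hbLaR _ _ _ _))
        (rz (hcLaR _ _ _ _))]
      exact zero_mem _
    · exact bAB aR bR cR haRbR haRcR m4 p.1 p.2 q.1 q.2
    · exact hAK (b2Z p.1 p.2 q.1 q.2)
    · rw [← lie_skew]
      exact neg_mem (bAB aL bL cL haLbL haLcL m3 q.1 q.2 p.1 p.2)
    · rw [bz _ _ _ _ (hbLaR _ _ _ _) (hbLaR _ _ _ _) (hcLaR _ _ _ _) (hcLaR _ _ _ _)]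
      exact zero_mem _
    · exact bBB aL bL cL hbLbL hcLcL hbLcL m1 p.1 p.2 q.1 q.2
    · rw [bz _ _ _ _ (hbLbR _ _ _ _) (hbLcR _ _ _ _) (hcLbR _ _ _ _) (hcLcR _ _ _ _)]
      exact zero_mem _
    · exact hAK (b3Z p.1 p.2 q.1 q.2)
    · rw [bz _ _ _ _ (rz (haLbR _ _ _ _)) (rz (haLbR _ _ _ _)) (rz (haLcR _ _ _ _))
        (rz (haLcR _ _ _ _))]
      exact zero_mem _
    · rw [← lie_skew]
      exact neg_mem (bAB aR bR cR haRbR haRcR m4 q.1 q.2 p.1 p.2)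
    · rw [bz _ _ _ _ (rz (hbLbR _ _ _ _)) (rz (hcLbR _ _ _ _)) (rz (hbLcR _ _ _ _))
        (rz (hcLcR _ _ _ _))]
      exact zero_mem _
    · exact bBB aR bR cR hbRbR hcRcR hbRcR m2 p.1 p.2 q.1 q.2
    · exact hAK (b4Z p.1 p.2 q.1 q.2)
    · rw [← lie_skew]
      exact neg_mem (hAK (b1Z q.1 q.2 p.1 p.2))
    · rw [← lie_skew]
      exact neg_mem (hAK (b2Z q.1 q.2 p.1 p.2))
    · rw [← lie_skew]
      exact neg_mem (hAK (b3Z q.1 q.2 p.1 p.2))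
    · rw [← lie_skew]
      exact neg_mem (hAK (b4Z q.1 q.2 p.1 p.2))
    · rw [bZZ]
      exact zero_mem _
  have keyA : ∀ u ∈ ((Set.range fun p : Fin n × Fin n => aL p.1 p.2 - aL p.2 p.1)
        ∪ (Set.range fun p : Fin n × Fin n => aR p.1 p.2 - aR p.2 p.1)
        ∪ (Set.range fun p : Fin n × Fin n => bL p.1 p.2 - cL p.1 p.2)
        ∪ (Set.range fun p : Fin n × Fin n => bR p.1 p.2 - cR p.1 p.2)
        ∪ (Set.range fun p : Fin n × Fin n => X p.1 p.2 - Complex.I • Y p.1 p.2)),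
      ∀ v ∈ (Set.range fun p : Fin n × Fin n => X p.1 p.2 - Complex.I • Y p.1 p.2),
      ⁅u, v⁆ ∈ A := by
    rintro u ((((⟨p, rfl⟩ | ⟨p, rfl⟩) | ⟨p, rfl⟩) | ⟨p, rfl⟩) | ⟨p, rfl⟩) v ⟨q, rfl⟩
    · exact b1Z p.1 p.2 q.1 q.2
    · exact b2Z p.1 p.2 q.1 q.2
    · exact b3Z p.1 p.2 q.1 q.2
    · exact b4Z p.1 p.2 q.1 q.2
    · rw [bZZ]
      exact zero_mem _
  have keyZ : ∀ u ∈ (Set.range fun p : Fin n × Fin n => X p.1 p.2 - Complex.I • Y p.1 p.2),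
      ∀ v ∈ (Set.range fun p : Fin n × Fin n => X p.1 p.2 - Complex.I • Y p.1 p.2),
      ⁅u, v⁆ = 0 := by
    rintro u ⟨p, rfl⟩ v ⟨q, rfl⟩
    exact bZZ p.1 p.2 q.1 q.2
  refine ⟨?_, hAK, ?_, ?_⟩
  · intro u hu v hv
    rw [hK] at hu hv
    exact lie_mem_span_aux key u hu v hv
  · intro u hu v hv
    rw [hA] at hu hv
    exact lie_zero_span_aux keyZ u hu v hv
  · intro u hu v hv
    rw [hK] at hu
    rw [hA] at hv
    exact lie_mem_span_aux keyA u hu v hv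
end
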